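/- arXiv:1212.4186 — 5 statements merged into one kernel-verified Lean document; each statement's English description precedes it below -/
import Mathlib

section
/- Let ħ > 0, let V : ℝ³ → ℝ and A : ℝ³ → ℝ³ be smooth, and let η : ℝ³ × I → ℝ be a smooth strictly positive function on an open time interval I satisfying ħ ∂η/∂t = −(ħ²/2) Δη + ħ A·∇η + (ħ/2)(∇·A) η − (1/2)|A|² η + V η. Define the forward drift B := ħ ∇ log η − A. Then B satisfies, for each component i = 1,2,3, the almost-sure stochastic Euler–Lagrange equation at the level of drift fields: ∂B_i/∂t + (B·∇)B_i + (ħ/2) ΔB_i = ∂V/∂x_i + Σ_j B_j (∂A_j/∂x_i − ∂A_i/∂x_j) + (ħ/2)(∂(∇·A)/∂x_i − ΔA_i). -/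
open MeasureTheory Real Set

noncomputable section

/-- Time partial derivative of a function of space `x ∈ ℝ³` and time `t`. -/
def pt (f : (Fin 3 → ℝ) → ℝ → ℝ) (x : Fin 3 → ℝ) (t : ℝ) : ℝ := deriv (f x) t

/-- Spatial partial derivative `∂/∂x_i` of a function of space and time. -/
def pd (i : Fin 3) (f : (Fin 3 → ℝ) → ℝ → ℝ) (x : Fin 3 → ℝ) (t : ℝ) : ℝ :=
  deriv (fun s => f (Function.update x i s) t) (x i)

/-- Spatial Laplacian `Δ = Σᵢ ∂²/∂x_i²` of a function of space and time. -/
def lap (f : (Fin 3 → ℝ) → ℝ → ℝ) (x : Fin 3 → ℝ) (t : ℝ) : ℝ := ∑ i, pd i (pd i f) x t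

/-- Spatial partial derivative `∂/∂x_i` of a function of space only. -/
def pds (i : Fin 3) (f : (Fin 3 → ℝ) → ℝ) (x : Fin 3 → ℝ) : ℝ :=
  deriv (fun s => f (Function.update x i s)) (x i)

namespace SELaux

variable {E : Type*} [NormedAddCommGroup E] [NormedSpace ℝ E]

def dd (v : E) (G : E → ℝ) (p : E) : ℝ := fderiv ℝ G p v

theorem one_le_coe_top : ((⊤ : ℕ∞) : WithTop ℕ∞) ≠ 0 := by
  exact WithTop.coe_ne_zero.mpr (ENat.top_ne_coe 0)

theorem diffAt {U : Set E} (hU : IsOpen U) {G : E → ℝ}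
    (hG : ContDiffOn ℝ (⊤ : ℕ∞) G U) {p : E} (hp : p ∈ U) :
    DifferentiableAt ℝ G p :=
  (hG.differentiableOn one_le_coe_top).differentiableAt (hU.mem_nhds hp)

theorem contDiffOn_dd {U : Set E} (hU : IsOpen U) {G : E → ℝ}
    (hG : ContDiffOn ℝ (⊤ : ℕ∞) G U) (v : E) :
    ContDiffOn ℝ (⊤ : ℕ∞) (dd v G) U := by
  have h1 : ContDiffOn ℝ (⊤ : ℕ∞) (fderiv ℝ G) U :=
    hG.fderiv_of_isOpen hU le_rfl
  exact h1.clm_apply contDiffOn_const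

theorem dd_congr {U : Set E} (hU : IsOpen U) {p : E} (hp : p ∈ U) {G H : E → ℝ}
    (h : ∀ q ∈ U, G q = H q) (v : E) : dd v G p = dd v H p := by
  unfold dd
  rw [Filter.EventuallyEq.fderiv_eq (Filter.eventuallyEq_of_mem (hU.mem_nhds hp) h)]

theorem dd_comm {U : Set E} (hU : IsOpen U) {G : E → ℝ}
    (hG : ContDiffOn ℝ (⊤ : ℕ∞) G U) {p : E} (hp : p ∈ U) (v w : E) :
    dd w (dd v G) p = dd v (dd w G) p := by
  have hG' : ContDiffOn ℝ (⊤ : ℕ∞) (fderiv ℝ G) U := hG.fderiv_of_isOpen hU le_rfl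
  have hdiff : DifferentiableAt ℝ (fderiv ℝ G) p :=
    ((hG'.differentiableOn one_le_coe_top).differentiableAt (hU.mem_nhds hp))
  have h'' := hdiff.hasFDerivAt
  have hev : ∀ᶠ y in nhds p, HasFDerivAt G (fderiv ℝ G y) y := by
    filter_upwards [hU.mem_nhds hp] with y hy
    exact (diffAt hU hG hy).hasFDerivAt
  have hsymm := second_derivative_symmetric_of_eventually hev h''
  have key : ∀ u : E, fderiv ℝ (dd u G) p
      = (ContinuousLinearMap.apply ℝ ℝ u).comp (fderiv ℝ (fderiv ℝ G) p) := by
    intro u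
    exact (((ContinuousLinearMap.apply ℝ ℝ u).hasFDerivAt).comp p h'').fderiv
  show fderiv ℝ (dd v G) p w = fderiv ℝ (dd w G) p v
  rw [key v, key w]
  simpa using hsymm w v

theorem dd_mul {f g : E → ℝ} {p : E} (hf : DifferentiableAt ℝ f p)
    (hg : DifferentiableAt ℝ g p) (v : E) :
    dd v (fun q => f q * g q) p = dd v f p * g p + f p * dd v g p := by
  unfold dd
  rw [fderiv_fun_mul hf hg]
  simp [smul_eq_mul]
  ring

theorem hasDerivAt_update (x : Fin 3 → ℝ) (i : Fin 3) (s : ℝ) :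
    HasDerivAt (fun u : ℝ => Function.update x i u) (Pi.single i 1) s := by
  have h : (fun u : ℝ => Function.update x i u)
      = fun u => Function.update x i 0 + u • (Pi.single i 1 : Fin 3 → ℝ) := by
    funext u; funext j
    rcases eq_or_ne j i with h | h
    · subst h; simp
    · simp [Function.update_of_ne h, Pi.single_apply, h]
  rw [h]
  simpa using ((hasDerivAt_id s).smul_const (Pi.single i (1:ℝ))).const_add
    (Function.update x i 0)

theorem hasDerivAt_sec_space {G : (Fin 3 → ℝ) × ℝ → ℝ} {x : Fin 3 → ℝ} {t : ℝ}
    (hG : DifferentiableAt ℝ G (x, t)) (i : Fin 3) :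
    HasDerivAt (fun s => G (Function.update x i s, t))
      (dd ((Pi.single i 1 : Fin 3 → ℝ), (0:ℝ)) G (x, t)) (x i) := by
  have hpath : HasDerivAt (fun s : ℝ => (Function.update x i s, t))
      (((Pi.single i 1 : Fin 3 → ℝ), (0:ℝ))) (x i) :=
    (hasDerivAt_update x i (x i)).prodMk (hasDerivAt_const (x i) t)
  have hG' : HasFDerivAt G (fderiv ℝ G (x, t))
      ((fun s : ℝ => (Function.update x i s, t)) (x i)) := by
    simpa [Function.update_eq_self] using hG.hasFDerivAt
  simpa [dd, Function.comp_def] using hG'.comp_hasDerivAt (x i) hpath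

theorem hasDerivAt_sec_time {G : (Fin 3 → ℝ) × ℝ → ℝ} {x : Fin 3 → ℝ} {t : ℝ}
    (hG : DifferentiableAt ℝ G (x, t)) :
    HasDerivAt (fun s => G (x, s)) (dd ((0 : Fin 3 → ℝ), (1:ℝ)) G (x, t)) t := by
  have hpath : HasDerivAt (fun s : ℝ => ((x : Fin 3 → ℝ), s)) (((0 : Fin 3 → ℝ), (1:ℝ))) t :=
    (hasDerivAt_const t x).prodMk (hasDerivAt_id t)
  simpa [dd, Function.comp_def] using hG.hasFDerivAt.comp_hasDerivAt t hpath

theorem hasDerivAt_sec_pds {g : (Fin 3 → ℝ) → ℝ} {x : Fin 3 → ℝ}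
    (hg : DifferentiableAt ℝ g x) (i : Fin 3) :
    HasDerivAt (fun s => g (Function.update x i s)) (fderiv ℝ g x (Pi.single i 1)) (x i) := by
  have hg' : HasFDerivAt g (fderiv ℝ g x) ((fun s : ℝ => Function.update x i s) (x i)) := by
    simpa [Function.update_eq_self] using hg.hasFDerivAt
  simpa [Function.comp_def] using hg'.comp_hasDerivAt (x i) (hasDerivAt_update x i (x i))

end SELaux

open SELaux

/-- **Stochastic Euler–Lagrange equation at the level of drift fields** (case with a
vector potential `A`).  If `η > 0` is smooth on `ℝ³ × I` and solves
`ħ ∂η/∂t = −(ħ²/2)Δη + ħ A·∇η + (ħ/2)(∇·A)η − (1/2)|A|²η + Vη`, then the forward drift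
`B := ħ∇log η − A` satisfies, componentwise,
`∂B_i/∂t + (B·∇)B_i + (ħ/2)ΔB_i
   = ∂V/∂x_i + Σ_j B_j(∂A_j/∂x_i − ∂A_j/∂x_j) + (ħ/2)(∂(∇·A)/∂x_i − ΔA_i)`. -/
theorem stochastic_euler_lagrange_with_vector_potential
    (hbar : ℝ) (hhbar : 0 < hbar)
    (V : (Fin 3 → ℝ) → ℝ) (hV : ContDiff ℝ (⊤ : ℕ∞) V)
    (A : (Fin 3 → ℝ) → Fin 3 → ℝ) (hA : ContDiff ℝ (⊤ : ℕ∞) A)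
    (I : Set ℝ) (hI : IsOpen I)
    (η : (Fin 3 → ℝ) → ℝ → ℝ)
    (hηsmooth : ContDiffOn ℝ (⊤ : ℕ∞) (fun p : (Fin 3 → ℝ) × ℝ => η p.1 p.2) (univ ×ˢ I))
    (hηpos : ∀ x, ∀ t ∈ I, 0 < η x t)
    (hPDE : ∀ x, ∀ t ∈ I,
      hbar * pt η x t =
        -(hbar ^ 2 / 2) * lap η x t + hbar * (∑ j, A x j * pd j η x t)
          + (hbar / 2) * (∑ j, pds j (fun y => A y j) x) * η x t
          - (1 / 2) * (∑ j, (A x j) ^ 2) * η x t + V x * η x t)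
    (B : (Fin 3 → ℝ) → ℝ → Fin 3 → ℝ)
    (hB : ∀ x t i, B x t i = hbar * pd i (fun y s => Real.log (η y s)) x t - A x i) :
    ∀ x, ∀ t ∈ I, ∀ i,
      pt (fun y s => B y s i) x t
        + (∑ j, B x t j * pd j (fun y s => B y s i) x t)
        + (hbar / 2) * lap (fun y s => B y s i) x t
      = pds i V x
        + (∑ j, B x t j * (pds i (fun y => A y j) x - pds j (fun y => A y i) x))
        + (hbar / 2) * (pds i (fun y => ∑ j, pds j (fun z => A z j) y) x
            - ∑ j, pds j (pds j (fun y => A y i)) x) := by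
  intro x t ht i
  have hUopen : IsOpen ((univ : Set (Fin 3 → ℝ)) ×ˢ I) := isOpen_univ.prod hI
  have hmemU : ∀ (y : Fin 3 → ℝ) (s : ℝ), s ∈ I → (y, s) ∈ (univ : Set (Fin 3 → ℝ)) ×ˢ I :=
    fun y s hs => ⟨mem_univ y, hs⟩
  have hp : ((x, t) : (Fin 3 → ℝ) × ℝ) ∈ (univ : Set (Fin 3 → ℝ)) ×ˢ I := hmemU x t ht
  set N : (Fin 3 → ℝ) × ℝ → ℝ := fun p : (Fin 3 → ℝ) × ℝ => η p.1 p.2 with hNdef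
  set F : (Fin 3 → ℝ) × ℝ → ℝ := fun p : (Fin 3 → ℝ) × ℝ => Real.log (η p.1 p.2) with hFdef
  have hN : ContDiffOn ℝ (⊤ : ℕ∞) N ((univ : Set (Fin 3 → ℝ)) ×ˢ I) := hηsmooth
  have hF : ContDiffOn ℝ (⊤ : ℕ∞) F ((univ : Set (Fin 3 → ℝ)) ×ˢ I) :=
    hηsmooth.log (fun q hq => (hηpos q.1 q.2 hq.2).ne')
  have hdN : ∀ q ∈ (univ : Set (Fin 3 → ℝ)) ×ˢ I, DifferentiableAt ℝ N q :=
    fun q hq => SELaux.diffAt hUopen hN hq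
  have hdF : ∀ q ∈ (univ : Set (Fin 3 → ℝ)) ×ˢ I, DifferentiableAt ℝ F q :=
    fun q hq => SELaux.diffAt hUopen hF hq
  have hsm1 : ∀ v, ContDiffOn ℝ (⊤ : ℕ∞) (dd v F) ((univ : Set (Fin 3 → ℝ)) ×ˢ I) :=
    fun v => contDiffOn_dd hUopen hF v
  have hsm2 : ∀ v w, ContDiffOn ℝ (⊤ : ℕ∞) (dd w (dd v F)) ((univ : Set (Fin 3 → ℝ)) ×ˢ I) :=
    fun v w => contDiffOn_dd hUopen (hsm1 v) w
  have hAj : ∀ j, ContDiff ℝ (⊤ : ℕ∞) (fun y => A y j) := fun j => contDiff_pi.mp hA j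
  have hdAj : ∀ j k : Fin 3, ContDiff ℝ (⊤ : ℕ∞)
      (fun y => fderiv ℝ (fun z => A z k) y (Pi.single j 1)) :=
    fun j k => ((hAj k).fderiv_right le_rfl).clm_apply contDiff_const
  -- basic conversions
  have hpdL : ∀ (y : Fin 3 → ℝ), ∀ s ∈ I, ∀ k : Fin 3,
      pd k (fun z u => Real.log (η z u)) y s = dd ((Pi.single k 1 : Fin 3 → ℝ), (0:ℝ)) F (y, s) :=
    fun y s hs k => (hasDerivAt_sec_space (hdF _ (hmemU y s hs)) k).deriv
  have hNF : ∀ q ∈ (univ : Set (Fin 3 → ℝ)) ×ˢ I, ∀ v, dd v N q = N q * dd v F q := by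
    intro q hq v
    have hne : N q ≠ 0 := (hηpos q.1 q.2 hq.2).ne'
    have hlog : HasFDerivAt F ((N q)⁻¹ • fderiv ℝ N q) q := (hdN q hq).hasFDerivAt.log hne
    have h2 : dd v F q = (N q)⁻¹ * dd v N q := by
      show fderiv ℝ F q v = _
      rw [hlog.fderiv]
      simp [dd]
    rw [h2]
    field_simp
  have hptη : ∀ (y : Fin 3 → ℝ), ∀ s ∈ I,
      pt η y s = N (y,s) * dd ((0 : Fin 3 → ℝ), (1:ℝ)) F (y,s) := by
    intro y s hs
    have h1 : pt η y s = dd ((0 : Fin 3 → ℝ), (1:ℝ)) N (y,s) :=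
      (hasDerivAt_sec_time (hdN _ (hmemU y s hs))).deriv
    rw [h1, hNF _ (hmemU y s hs)]
  have hpdη : ∀ (y : Fin 3 → ℝ), ∀ s ∈ I, ∀ j : Fin 3,
      pd j η y s = N (y,s) * dd ((Pi.single j 1 : Fin 3 → ℝ), (0:ℝ)) F (y,s) := by
    intro y s hs j
    have h1 : pd j η y s = dd ((Pi.single j 1 : Fin 3 → ℝ), (0:ℝ)) N (y,s) :=
      (hasDerivAt_sec_space (hdN _ (hmemU y s hs)) j).deriv
    rw [h1, hNF _ (hmemU y s hs)]
  have hpd2η : ∀ (y : Fin 3 → ℝ), ∀ s ∈ I, ∀ j : Fin 3,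
      pd j (pd j η) y s =
        N (y,s) * dd ((Pi.single j 1 : Fin 3 → ℝ), (0:ℝ)) F (y,s)
            * dd ((Pi.single j 1 : Fin 3 → ℝ), (0:ℝ)) F (y,s)
          + N (y,s) * dd ((Pi.single j 1 : Fin 3 → ℝ), (0:ℝ))
              (dd ((Pi.single j 1 : Fin 3 → ℝ), (0:ℝ)) F) (y,s) := by
    intro y s hs j
    have hq := hmemU y s hs
    have h1 : (fun u => pd j η (Function.update y j u) s)
        = fun u => dd ((Pi.single j 1 : Fin 3 → ℝ), (0:ℝ)) N (Function.update y j u, s) :=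
      funext fun u => (hasDerivAt_sec_space (hdN _ (hmemU _ s hs)) j).deriv
    have h2 : pd j (pd j η) y s
        = dd ((Pi.single j 1 : Fin 3 → ℝ), (0:ℝ))
            (dd ((Pi.single j 1 : Fin 3 → ℝ), (0:ℝ)) N) (y, s) := by
      show deriv (fun u => pd j η (Function.update y j u) s) (y j) = _
      rw [h1]
      exact (hasDerivAt_sec_space (SELaux.diffAt hUopen (contDiffOn_dd hUopen hN _) hq) j).deriv
    have h3 : dd ((Pi.single j 1 : Fin 3 → ℝ), (0:ℝ))
            (dd ((Pi.single j 1 : Fin 3 → ℝ), (0:ℝ)) N) (y, s)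
        = dd ((Pi.single j 1 : Fin 3 → ℝ), (0:ℝ))
            (fun q => N q * dd ((Pi.single j 1 : Fin 3 → ℝ), (0:ℝ)) F q) (y, s) :=
      dd_congr hUopen hq (fun q hq' => hNF q hq' _) _
    have h4 : dd ((Pi.single j 1 : Fin 3 → ℝ), (0:ℝ))
            (fun q => N q * dd ((Pi.single j 1 : Fin 3 → ℝ), (0:ℝ)) F q) (y, s)
        = dd ((Pi.single j 1 : Fin 3 → ℝ), (0:ℝ)) N (y,s)
              * dd ((Pi.single j 1 : Fin 3 → ℝ), (0:ℝ)) F (y,s)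
            + N (y,s) * dd ((Pi.single j 1 : Fin 3 → ℝ), (0:ℝ))
                (dd ((Pi.single j 1 : Fin 3 → ℝ), (0:ℝ)) F) (y,s) :=
      dd_mul (hdN _ hq) (SELaux.diffAt hUopen (hsm1 _) hq) _
    rw [h2, h3, h4, hNF _ hq]
  have hpds : ∀ (y : Fin 3 → ℝ) (j k : Fin 3),
      pds j (fun z => A z k) y = fderiv ℝ (fun z => A z k) y (Pi.single j 1) :=
    fun y j k =>
      (hasDerivAt_sec_pds ((hAj k).differentiable one_le_coe_top).differentiableAt j).deriv
  -- PDE in log form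
  have hEqn : ∀ (y : Fin 3 → ℝ), ∀ s ∈ I,
      hbar * dd ((0 : Fin 3 → ℝ), (1:ℝ)) F (y,s) =
        -(hbar ^ 2 / 2) *
          ((dd ((Pi.single (0:Fin 3) 1 : Fin 3 → ℝ), (0:ℝ)) F (y,s)
              * dd ((Pi.single (0:Fin 3) 1 : Fin 3 → ℝ), (0:ℝ)) F (y,s)
            + dd ((Pi.single (0:Fin 3) 1 : Fin 3 → ℝ), (0:ℝ))
                (dd ((Pi.single (0:Fin 3) 1 : Fin 3 → ℝ), (0:ℝ)) F) (y,s))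
          + (dd ((Pi.single (1:Fin 3) 1 : Fin 3 → ℝ), (0:ℝ)) F (y,s)
              * dd ((Pi.single (1:Fin 3) 1 : Fin 3 → ℝ), (0:ℝ)) F (y,s)
            + dd ((Pi.single (1:Fin 3) 1 : Fin 3 → ℝ), (0:ℝ))
                (dd ((Pi.single (1:Fin 3) 1 : Fin 3 → ℝ), (0:ℝ)) F) (y,s))
          + (dd ((Pi.single (2:Fin 3) 1 : Fin 3 → ℝ), (0:ℝ)) F (y,s)
              * dd ((Pi.single (2:Fin 3) 1 : Fin 3 → ℝ), (0:ℝ)) F (y,s)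
            + dd ((Pi.single (2:Fin 3) 1 : Fin 3 → ℝ), (0:ℝ))
                (dd ((Pi.single (2:Fin 3) 1 : Fin 3 → ℝ), (0:ℝ)) F) (y,s)))
        + hbar *
          (A y 0 * dd ((Pi.single (0:Fin 3) 1 : Fin 3 → ℝ), (0:ℝ)) F (y,s)
           + A y 1 * dd ((Pi.single (1:Fin 3) 1 : Fin 3 → ℝ), (0:ℝ)) F (y,s)
           + A y 2 * dd ((Pi.single (2:Fin 3) 1 : Fin 3 → ℝ), (0:ℝ)) F (y,s))
        + (hbar / 2) *
          (fderiv ℝ (fun z => A z 0) y (Pi.single 0 1)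
           + fderiv ℝ (fun z => A z 1) y (Pi.single 1 1)
           + fderiv ℝ (fun z => A z 2) y (Pi.single 2 1))
        - (1 / 2) * (A y 0 * A y 0 + A y 1 * A y 1 + A y 2 * A y 2)
        + V y := by
    intro y s hs
    have hne : N (y,s) ≠ 0 := (hηpos y s hs).ne'
    have EE := hPDE y s hs
    unfold lap at EE
    simp only [Fin.sum_univ_three] at EE
    rw [hptη y s hs, hpdη y s hs 0, hpdη y s hs 1, hpdη y s hs 2,
        hpd2η y s hs 0, hpd2η y s hs 1, hpd2η y s hs 2,
        hpds y 0 0, hpds y 1 1, hpds y 2 2] at EE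
    apply mul_left_cancel₀ hne
    linear_combination EE
  -- atoms for differentiating in direction i at (x,t)
  have hatF : ∀ j : Fin 3, HasDerivAt
      (fun u => dd ((Pi.single j 1 : Fin 3 → ℝ), (0:ℝ)) F (Function.update x i u, t))
      (dd ((Pi.single i 1 : Fin 3 → ℝ), (0:ℝ))
        (dd ((Pi.single j 1 : Fin 3 → ℝ), (0:ℝ)) F) (x, t)) (x i) :=
    fun j => hasDerivAt_sec_space (SELaux.diffAt hUopen (hsm1 _) hp) i
  have hatFF : ∀ j : Fin 3, HasDerivAt
      (fun u => dd ((Pi.single j 1 : Fin 3 → ℝ), (0:ℝ))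
        (dd ((Pi.single j 1 : Fin 3 → ℝ), (0:ℝ)) F) (Function.update x i u, t))
      (dd ((Pi.single i 1 : Fin 3 → ℝ), (0:ℝ))
        (dd ((Pi.single j 1 : Fin 3 → ℝ), (0:ℝ))
          (dd ((Pi.single j 1 : Fin 3 → ℝ), (0:ℝ)) F)) (x, t)) (x i) :=
    fun j => hasDerivAt_sec_space (SELaux.diffAt hUopen (hsm2 _ _) hp) i
  have hatT : HasDerivAt
      (fun u => dd ((0 : Fin 3 → ℝ), (1:ℝ)) F (Function.update x i u, t))
      (dd ((Pi.single i 1 : Fin 3 → ℝ), (0:ℝ))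
        (dd ((0 : Fin 3 → ℝ), (1:ℝ)) F) (x, t)) (x i) :=
    hasDerivAt_sec_space (SELaux.diffAt hUopen (hsm1 _) hp) i
  have hatA : ∀ j : Fin 3, HasDerivAt (fun u => A (Function.update x i u) j)
      (fderiv ℝ (fun z => A z j) x (Pi.single i 1)) (x i) :=
    fun j => hasDerivAt_sec_pds ((hAj j).differentiable one_le_coe_top).differentiableAt i
  have hatdA : ∀ j : Fin 3, HasDerivAt
      (fun u => fderiv ℝ (fun z => A z j) (Function.update x i u) (Pi.single j 1))
      (fderiv ℝ (fun y => fderiv ℝ (fun z => A z j) y (Pi.single j 1)) x (Pi.single i 1)) (x i) :=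
    fun j => hasDerivAt_sec_pds ((hdAj j j).differentiable one_le_coe_top).differentiableAt i
  have hatV : HasDerivAt (fun u => V (Function.update x i u))
      (fderiv ℝ V x (Pi.single i 1)) (x i) :=
    hasDerivAt_sec_pds (hV.differentiable one_le_coe_top).differentiableAt i
  -- differentiate the log-form PDE in direction i
  have hL := hatT.const_mul hbar
  have hR := (((((((hatF 0).mul (hatF 0)).add (hatFF 0)).add
        (((hatF 1).mul (hatF 1)).add (hatFF 1))).add
        (((hatF 2).mul (hatF 2)).add (hatFF 2))).const_mul (-(hbar ^ 2 / 2))).add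
      (((((hatA 0).mul (hatF 0)).add ((hatA 1).mul (hatF 1))).add
        ((hatA 2).mul (hatF 2))).const_mul hbar)).add
      ((((hatdA 0).add (hatdA 1)).add (hatdA 2)).const_mul (hbar / 2)) |>.sub
      (((((hatA 0).mul (hatA 0)).add ((hatA 1).mul (hatA 1))).add
        ((hatA 2).mul (hatA 2))).const_mul (1 / 2)) |>.add hatV
  have hfun : (fun u => hbar * dd ((0 : Fin 3 → ℝ), (1:ℝ)) F (Function.update x i u, t))
      = (fun u =>
        -(hbar ^ 2 / 2) *
          ((dd ((Pi.single (0:Fin 3) 1 : Fin 3 → ℝ), (0:ℝ)) F (Function.update x i u, t)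
              * dd ((Pi.single (0:Fin 3) 1 : Fin 3 → ℝ), (0:ℝ)) F (Function.update x i u, t)
            + dd ((Pi.single (0:Fin 3) 1 : Fin 3 → ℝ), (0:ℝ))
                (dd ((Pi.single (0:Fin 3) 1 : Fin 3 → ℝ), (0:ℝ)) F) (Function.update x i u, t))
          + (dd ((Pi.single (1:Fin 3) 1 : Fin 3 → ℝ), (0:ℝ)) F (Function.update x i u, t)
              * dd ((Pi.single (1:Fin 3) 1 : Fin 3 → ℝ), (0:ℝ)) F (Function.update x i u, t)
            + dd ((Pi.single (1:Fin 3) 1 : Fin 3 → ℝ), (0:ℝ))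
                (dd ((Pi.single (1:Fin 3) 1 : Fin 3 → ℝ), (0:ℝ)) F) (Function.update x i u, t))
          + (dd ((Pi.single (2:Fin 3) 1 : Fin 3 → ℝ), (0:ℝ)) F (Function.update x i u, t)
              * dd ((Pi.single (2:Fin 3) 1 : Fin 3 → ℝ), (0:ℝ)) F (Function.update x i u, t)
            + dd ((Pi.single (2:Fin 3) 1 : Fin 3 → ℝ), (0:ℝ))
                (dd ((Pi.single (2:Fin 3) 1 : Fin 3 → ℝ), (0:ℝ)) F) (Function.update x i u, t)))
        + hbar *
          (A (Function.update x i u) 0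
              * dd ((Pi.single (0:Fin 3) 1 : Fin 3 → ℝ), (0:ℝ)) F (Function.update x i u, t)
           + A (Function.update x i u) 1
              * dd ((Pi.single (1:Fin 3) 1 : Fin 3 → ℝ), (0:ℝ)) F (Function.update x i u, t)
           + A (Function.update x i u) 2
              * dd ((Pi.single (2:Fin 3) 1 : Fin 3 → ℝ), (0:ℝ)) F (Function.update x i u, t))
        + (hbar / 2) *
          (fderiv ℝ (fun z => A z 0) (Function.update x i u) (Pi.single 0 1)
           + fderiv ℝ (fun z => A z 1) (Function.update x i u) (Pi.single 1 1)
           + fderiv ℝ (fun z => A z 2) (Function.update x i u) (Pi.single 2 1))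
        - (1 / 2) * (A (Function.update x i u) 0 * A (Function.update x i u) 0
            + A (Function.update x i u) 1 * A (Function.update x i u) 1
            + A (Function.update x i u) 2 * A (Function.update x i u) 2)
        + V (Function.update x i u)) :=
    funext fun u => hEqn (Function.update x i u) t ht
  have hmid : deriv (fun u => hbar * dd ((0 : Fin 3 → ℝ), (1:ℝ)) F (Function.update x i u, t)) (x i)
      = deriv (fun u =>
        -(hbar ^ 2 / 2) *
          ((dd ((Pi.single (0:Fin 3) 1 : Fin 3 → ℝ), (0:ℝ)) F (Function.update x i u, t)
              * dd ((Pi.single (0:Fin 3) 1 : Fin 3 → ℝ), (0:ℝ)) F (Function.update x i u, t)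
            + dd ((Pi.single (0:Fin 3) 1 : Fin 3 → ℝ), (0:ℝ))
                (dd ((Pi.single (0:Fin 3) 1 : Fin 3 → ℝ), (0:ℝ)) F) (Function.update x i u, t))
          + (dd ((Pi.single (1:Fin 3) 1 : Fin 3 → ℝ), (0:ℝ)) F (Function.update x i u, t)
              * dd ((Pi.single (1:Fin 3) 1 : Fin 3 → ℝ), (0:ℝ)) F (Function.update x i u, t)
            + dd ((Pi.single (1:Fin 3) 1 : Fin 3 → ℝ), (0:ℝ))
                (dd ((Pi.single (1:Fin 3) 1 : Fin 3 → ℝ), (0:ℝ)) F) (Function.update x i u, t))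
          + (dd ((Pi.single (2:Fin 3) 1 : Fin 3 → ℝ), (0:ℝ)) F (Function.update x i u, t)
              * dd ((Pi.single (2:Fin 3) 1 : Fin 3 → ℝ), (0:ℝ)) F (Function.update x i u, t)
            + dd ((Pi.single (2:Fin 3) 1 : Fin 3 → ℝ), (0:ℝ))
                (dd ((Pi.single (2:Fin 3) 1 : Fin 3 → ℝ), (0:ℝ)) F) (Function.update x i u, t)))
        + hbar *
          (A (Function.update x i u) 0
              * dd ((Pi.single (0:Fin 3) 1 : Fin 3 → ℝ), (0:ℝ)) F (Function.update x i u, t)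
           + A (Function.update x i u) 1
              * dd ((Pi.single (1:Fin 3) 1 : Fin 3 → ℝ), (0:ℝ)) F (Function.update x i u, t)
           + A (Function.update x i u) 2
              * dd ((Pi.single (2:Fin 3) 1 : Fin 3 → ℝ), (0:ℝ)) F (Function.update x i u, t))
        + (hbar / 2) *
          (fderiv ℝ (fun z => A z 0) (Function.update x i u) (Pi.single 0 1)
           + fderiv ℝ (fun z => A z 1) (Function.update x i u) (Pi.single 1 1)
           + fderiv ℝ (fun z => A z 2) (Function.update x i u) (Pi.single 2 1))
        - (1 / 2) * (A (Function.update x i u) 0 * A (Function.update x i u) 0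
            + A (Function.update x i u) 1 * A (Function.update x i u) 1
            + A (Function.update x i u) 2 * A (Function.update x i u) 2)
        + V (Function.update x i u)) (x i) := by rw [hfun]
  have key := (hL.deriv.symm.trans hmid).trans hR.deriv
  simp only [Function.update_eq_self] at key
  -- goal-side conversions
  have hg1 : pt (fun y s => B y s i) x t
      = hbar * dd ((0 : Fin 3 → ℝ), (1:ℝ))
          (dd ((Pi.single i 1 : Fin 3 → ℝ), (0:ℝ)) F) (x,t) := by
    have hev : (fun s => B x s i) =ᶠ[nhds t]
        fun s => hbar * dd ((Pi.single i 1 : Fin 3 → ℝ), (0:ℝ)) F (x, s) - A x i := by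
      filter_upwards [hI.mem_nhds ht] with s hs
      rw [hB x s i, hpdL x s hs i]
    have h2 : HasDerivAt
        (fun s => hbar * dd ((Pi.single i 1 : Fin 3 → ℝ), (0:ℝ)) F (x, s) - A x i)
        (hbar * dd ((0 : Fin 3 → ℝ), (1:ℝ))
          (dd ((Pi.single i 1 : Fin 3 → ℝ), (0:ℝ)) F) (x,t)) t :=
      ((hasDerivAt_sec_time (SELaux.diffAt hUopen (hsm1 _) hp)).const_mul hbar).sub_const (A x i)
    show deriv (fun s => B x s i) t = _
    rw [hev.deriv_eq]
    exact h2.deriv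
  have hg2 : ∀ (y : Fin 3 → ℝ), ∀ s ∈ I, ∀ j k : Fin 3,
      pd j (fun z u => B z u k) y s
        = hbar * dd ((Pi.single j 1 : Fin 3 → ℝ), (0:ℝ))
            (dd ((Pi.single k 1 : Fin 3 → ℝ), (0:ℝ)) F) (y,s)
          - fderiv ℝ (fun z => A z k) y (Pi.single j 1) := by
    intro y s hs j k
    have hq := hmemU y s hs
    have hfe : (fun u => B (Function.update y j u) s k)
        = fun u => hbar * dd ((Pi.single k 1 : Fin 3 → ℝ), (0:ℝ)) F (Function.update y j u, s)
            - A (Function.update y j u) k := by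
      funext u; rw [hB, hpdL _ s hs k]
    show deriv (fun u => B (Function.update y j u) s k) (y j) = _
    rw [hfe]
    exact (((hasDerivAt_sec_space (SELaux.diffAt hUopen (hsm1 _) hq) j).const_mul hbar).sub
      (hasDerivAt_sec_pds (((hAj k).differentiable one_le_coe_top).differentiableAt) j)).deriv
  have hg3 : ∀ j : Fin 3, pd j (pd j (fun y s => B y s i)) x t
      = hbar * dd ((Pi.single j 1 : Fin 3 → ℝ), (0:ℝ))
          (dd ((Pi.single j 1 : Fin 3 → ℝ), (0:ℝ))
            (dd ((Pi.single i 1 : Fin 3 → ℝ), (0:ℝ)) F)) (x,t)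
        - fderiv ℝ (fun y => fderiv ℝ (fun z => A z i) y (Pi.single j 1)) x (Pi.single j 1) := by
    intro j
    have hfe : (fun u => pd j (fun z v => B z v i) (Function.update x j u) t)
        = fun u => hbar * dd ((Pi.single j 1 : Fin 3 → ℝ), (0:ℝ))
              (dd ((Pi.single i 1 : Fin 3 → ℝ), (0:ℝ)) F) (Function.update x j u, t)
            - fderiv ℝ (fun z => A z i) (Function.update x j u) (Pi.single j 1) :=
      funext fun u => hg2 _ t ht j i
    show deriv (fun u => pd j (fun z v => B z v i) (Function.update x j u) t) (x j) = _
    rw [hfe]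
    exact (((hasDerivAt_sec_space (SELaux.diffAt hUopen (hsm2 _ _) hp) j).const_mul hbar).sub
      (hasDerivAt_sec_pds (((hdAj j i).differentiable one_le_coe_top).differentiableAt) j)).deriv
  have hg4 : ∀ j : Fin 3, B x t j
      = hbar * dd ((Pi.single j 1 : Fin 3 → ℝ), (0:ℝ)) F (x,t) - A x j := by
    intro j; rw [hB, hpdL x t ht j]
  have hg5 : pds i V x = fderiv ℝ V x (Pi.single i 1) :=
    (hasDerivAt_sec_pds (hV.differentiable one_le_coe_top).differentiableAt i).deriv
  have hg7 : pds i (fun y => ∑ j, pds j (fun z => A z j) y) x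
      = fderiv ℝ (fun y => fderiv ℝ (fun z => A z 0) y (Pi.single 0 1)) x (Pi.single i 1)
        + fderiv ℝ (fun y => fderiv ℝ (fun z => A z 1) y (Pi.single 1 1)) x (Pi.single i 1)
        + fderiv ℝ (fun y => fderiv ℝ (fun z => A z 2) y (Pi.single 2 1)) x (Pi.single i 1) := by
    have hfe : (fun u => ∑ j, pds j (fun z => A z j) (Function.update x i u))
        = fun u => fderiv ℝ (fun z => A z 0) (Function.update x i u) (Pi.single 0 1)
            + fderiv ℝ (fun z => A z 1) (Function.update x i u) (Pi.single 1 1)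
            + fderiv ℝ (fun z => A z 2) (Function.update x i u) (Pi.single 2 1) := by
      funext u
      rw [Fin.sum_univ_three, hpds _ 0 0, hpds _ 1 1, hpds _ 2 2]
    show deriv (fun u => ∑ j, pds j (fun z => A z j) (Function.update x i u)) (x i) = _
    rw [hfe]
    exact ((((hasDerivAt_sec_pds (((hdAj 0 0).differentiable one_le_coe_top).differentiableAt) i)).add
      ((hasDerivAt_sec_pds (((hdAj 1 1).differentiable one_le_coe_top).differentiableAt) i))).add
      ((hasDerivAt_sec_pds (((hdAj 2 2).differentiable one_le_coe_top).differentiableAt) i))).deriv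
  have hg8 : ∀ j : Fin 3, pds j (pds j (fun y => A y i)) x
      = fderiv ℝ (fun y => fderiv ℝ (fun z => A z i) y (Pi.single j 1)) x (Pi.single j 1) := by
    intro j
    have hfe : (fun u => pds j (fun z => A z i) (Function.update x j u))
        = fun u => fderiv ℝ (fun z => A z i) (Function.update x j u) (Pi.single j 1) :=
      funext fun u => hpds _ j i
    show deriv (fun u => pds j (fun z => A z i) (Function.update x j u)) (x j) = _
    rw [hfe]
    exact (hasDerivAt_sec_pds (((hdAj j i).differentiable one_le_coe_top).differentiableAt) j).deriv
  -- symmetry of mixed derivatives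
  have hswapT : dd ((0 : Fin 3 → ℝ), (1:ℝ)) (dd ((Pi.single i 1 : Fin 3 → ℝ), (0:ℝ)) F) (x,t)
      = dd ((Pi.single i 1 : Fin 3 → ℝ), (0:ℝ)) (dd ((0 : Fin 3 → ℝ), (1:ℝ)) F) (x,t) :=
    dd_comm hUopen hF hp ((Pi.single i 1 : Fin 3 → ℝ), (0:ℝ)) ((0 : Fin 3 → ℝ), (1:ℝ))
  have hswapG : ∀ j : Fin 3,
      dd ((Pi.single j 1 : Fin 3 → ℝ), (0:ℝ)) (dd ((Pi.single i 1 : Fin 3 → ℝ), (0:ℝ)) F) (x,t)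
      = dd ((Pi.single i 1 : Fin 3 → ℝ), (0:ℝ)) (dd ((Pi.single j 1 : Fin 3 → ℝ), (0:ℝ)) F) (x,t) :=
    fun j => dd_comm hUopen hF hp ((Pi.single i 1 : Fin 3 → ℝ), (0:ℝ))
      ((Pi.single j 1 : Fin 3 → ℝ), (0:ℝ))
  have hswap3 : ∀ j : Fin 3,
      dd ((Pi.single j 1 : Fin 3 → ℝ), (0:ℝ)) (dd ((Pi.single j 1 : Fin 3 → ℝ), (0:ℝ))
        (dd ((Pi.single i 1 : Fin 3 → ℝ), (0:ℝ)) F)) (x,t)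
      = dd ((Pi.single i 1 : Fin 3 → ℝ), (0:ℝ)) (dd ((Pi.single j 1 : Fin 3 → ℝ), (0:ℝ))
        (dd ((Pi.single j 1 : Fin 3 → ℝ), (0:ℝ)) F)) (x,t) := by
    intro j
    have h1 : dd ((Pi.single j 1 : Fin 3 → ℝ), (0:ℝ)) (dd ((Pi.single j 1 : Fin 3 → ℝ), (0:ℝ))
          (dd ((Pi.single i 1 : Fin 3 → ℝ), (0:ℝ)) F)) (x,t)
        = dd ((Pi.single j 1 : Fin 3 → ℝ), (0:ℝ)) (dd ((Pi.single i 1 : Fin 3 → ℝ), (0:ℝ))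
          (dd ((Pi.single j 1 : Fin 3 → ℝ), (0:ℝ)) F)) (x,t) :=
      dd_congr hUopen hp (fun q hq => dd_comm hUopen hF hq _ _) _
    have h2 : dd ((Pi.single j 1 : Fin 3 → ℝ), (0:ℝ)) (dd ((Pi.single i 1 : Fin 3 → ℝ), (0:ℝ))
          (dd ((Pi.single j 1 : Fin 3 → ℝ), (0:ℝ)) F)) (x,t)
        = dd ((Pi.single i 1 : Fin 3 → ℝ), (0:ℝ)) (dd ((Pi.single j 1 : Fin 3 → ℝ), (0:ℝ))
          (dd ((Pi.single j 1 : Fin 3 → ℝ), (0:ℝ)) F)) (x,t) :=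
      dd_comm hUopen (hsm1 _) hp _ _
    exact h1.trans h2
  -- finale
  unfold lap
  rw [hg7]
  simp only [Fin.sum_univ_three]
  rw [hg1, hg2 x t ht 0 i, hg2 x t ht 1 i, hg2 x t ht 2 i,
      hg3 0, hg3 1, hg3 2, hg4 0, hg4 1, hg4 2, hg5,
      hpds x i 0, hpds x i 1, hpds x i 2, hpds x 0 i, hpds x 1 i, hpds x 2 i,
      hg8 0, hg8 1, hg8 2, hswapT, hswapG 0, hswapG 1, hswapG 2,
      hswap3 0, hswap3 1, hswap3 2]
  linear_combination key
end
end

section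
/- Let ħ > 0, let V : ℝ³ → ℝ be smooth, and let η* : ℝ³ × I → ℝ be a smooth strictly positive function on an open time interval I satisfying the adjoint (forward) heat equation with potential V: −ħ ∂η*/∂t = −(ħ²/2) Δη* + V η*. Define the backward drift B* := −ħ ∇ log η*. Then ∂B*/∂t + (B*·∇)B* − (ħ/2) ΔB* = ∇V. -/
open MeasureTheory Real Set

noncomputable section

/-! ### Auxiliary machinery: directional derivatives on `(Fin 3 → ℝ) × ℝ` -/

abbrev EE := (Fin 3 → ℝ) × ℝ

/-- Directional derivative of a function on space-time. -/
def Dv (v : EE) (G : EE → ℝ) : EE → ℝ := fun p => fderiv ℝ G p v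

/-- Spatial coordinate direction. -/
def ve (j : Fin 3) : EE := (Pi.single j 1, 0)

/-- Time direction. -/
def wt : EE := ((0 : Fin 3 → ℝ), (1 : ℝ))

lemma diffAt_of_smoothOn {G : EE → ℝ} {U : Set EE} (hU : IsOpen U)
    (hG : ContDiffOn ℝ (⊤:ℕ∞) G U) {p : EE} (hp : p ∈ U) : DifferentiableAt ℝ G p :=
  (hG.contDiffAt (hU.mem_nhds hp)).differentiableAt (by simp)

lemma Dv_smoothOn {G : EE → ℝ} {U : Set EE} (hU : IsOpen U)
    (hG : ContDiffOn ℝ (⊤:ℕ∞) G U) (v : EE) : ContDiffOn ℝ (⊤:ℕ∞) (Dv v G) U :=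
  (hG.fderiv_of_isOpen hU (by exact_mod_cast le_top)).clm_apply contDiffOn_const

lemma pd_eq {G : EE → ℝ} {x : Fin 3 → ℝ} {t : ℝ} (h : DifferentiableAt ℝ G (x, t)) (i : Fin 3) :
    pd i (fun y s => G (y, s)) x t = Dv (ve i) G (x, t) := by
  have hx : Function.update x i (x i) = x := Function.update_eq_self i x
  have hγ : HasDerivAt (fun s => ((Function.update x i s : Fin 3 → ℝ), t))
      ((Pi.single i 1 : Fin 3 → ℝ), (0:ℝ)) (x i) :=
    (hasDerivAt_update x i (x i)).prodMk (hasDerivAt_const _ _)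
  have hG : HasFDerivAt G (fderiv ℝ G (x, t)) ((Function.update x i (x i) : Fin 3 → ℝ), t) := by
    rw [hx]; exact h.hasFDerivAt
  exact (hG.comp_hasDerivAt (x i) hγ).deriv

lemma pt_eq {G : EE → ℝ} {x : Fin 3 → ℝ} {t : ℝ} (h : DifferentiableAt ℝ G (x, t)) :
    pt (fun y s => G (y, s)) x t = Dv wt G (x, t) := by
  have hγ : HasDerivAt (fun s : ℝ => ((x : Fin 3 → ℝ), s)) ((0 : Fin 3 → ℝ), (1:ℝ)) t :=
    (hasDerivAt_const _ _).prodMk (hasDerivAt_id _)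
  exact (h.hasFDerivAt.comp_hasDerivAt t hγ).deriv

lemma pds_eq {V : (Fin 3 → ℝ) → ℝ} {x : Fin 3 → ℝ} (h : DifferentiableAt ℝ V x) (i : Fin 3) :
    pds i V x = fderiv ℝ V x (Pi.single i 1) := by
  have hx : Function.update x i (x i) = x := Function.update_eq_self i x
  have hV : HasFDerivAt V (fderiv ℝ V x) (Function.update x i (x i)) := by
    rw [hx]; exact h.hasFDerivAt
  exact (hV.comp_hasDerivAt (x i) (hasDerivAt_update x i (x i))).deriv

lemma pd_congr {G H : EE → ℝ} {U : Set EE} (hU : IsOpen U) {x : Fin 3 → ℝ} {t : ℝ}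
    (hp : (x, t) ∈ U) (h : ∀ q ∈ U, G q = H q) (i : Fin 3) :
    pd i (fun y s => G (y, s)) x t = pd i (fun y s => H (y, s)) x t := by
  apply Filter.EventuallyEq.deriv_eq
  have hc : Continuous (fun s : ℝ => ((Function.update x i s : Fin 3 → ℝ), t)) := by fun_prop
  have hmem : (x i) ∈ (fun s : ℝ => ((Function.update x i s : Fin 3 → ℝ), t)) ⁻¹' U := by
    simpa [Function.update_eq_self] using hp
  filter_upwards [(hU.preimage hc).mem_nhds hmem] with s hs
  exact h _ hs

lemma pt_congr {G H : EE → ℝ} {U : Set EE} (hU : IsOpen U) {x : Fin 3 → ℝ} {t : ℝ}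
    (hp : (x, t) ∈ U) (h : ∀ q ∈ U, G q = H q) :
    pt (fun y s => G (y, s)) x t = pt (fun y s => H (y, s)) x t := by
  apply Filter.EventuallyEq.deriv_eq
  have hc : Continuous (fun s : ℝ => ((x : Fin 3 → ℝ), s)) := by fun_prop
  have hmem : t ∈ (fun s : ℝ => ((x : Fin 3 → ℝ), s)) ⁻¹' U := hp
  filter_upwards [(hU.preimage hc).mem_nhds hmem] with s hs
  exact h _ hs

lemma Dv_congr {G H : EE → ℝ} {U : Set EE} (hU : IsOpen U) {p : EE}
    (hp : p ∈ U) (h : ∀ q ∈ U, G q = H q) (v : EE) : Dv v G p = Dv v H p := by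
  unfold Dv
  congr 1
  apply Filter.EventuallyEq.fderiv_eq
  filter_upwards [hU.mem_nhds hp] with q hq
  exact h q hq

lemma Dv_comm {G : EE → ℝ} {U : Set EE} (hU : IsOpen U)
    (hG : ContDiffOn ℝ (⊤:ℕ∞) G U) {p : EE} (hp : p ∈ U) (a b : EE) :
    Dv a (Dv b G) p = Dv b (Dv a G) p := by
  set f' : EE → EE →L[ℝ] ℝ := fun q => fderiv ℝ G q with hf'
  have hf's : ContDiffOn ℝ (⊤:ℕ∞) f' U := hG.fderiv_of_isOpen hU (by exact_mod_cast le_top)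
  have hf'd : DifferentiableAt ℝ f' p :=
    (hf's.contDiffAt (hU.mem_nhds hp)).differentiableAt (by simp)
  set f'' := fderiv ℝ f' p with hf''def
  have hev : ∀ᶠ y in nhds p, HasFDerivAt G (f' y) y := by
    filter_upwards [hU.mem_nhds hp] with y hy
    exact (diffAt_of_smoothOn hU hG hy).hasFDerivAt
  have hsymm := second_derivative_symmetric_of_eventually hev hf'd.hasFDerivAt a b
  have h1 : ∀ u v : EE, Dv u (Dv v G) p = (f'' u) v := by
    intro u v
    have heq : (fun q => (ContinuousLinearMap.apply ℝ ℝ v) (f' q)) = Dv v G := rfl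
    have hc : HasFDerivAt (fun q => (ContinuousLinearMap.apply ℝ ℝ v) (f' q))
        ((ContinuousLinearMap.apply ℝ ℝ v).comp f'') p :=
      (ContinuousLinearMap.apply ℝ ℝ v).hasFDerivAt.comp p hf'd.hasFDerivAt
    rw [← heq]
    show fderiv ℝ (fun q => (ContinuousLinearMap.apply ℝ ℝ v) (f' q)) p u = (f'' u) v
    rw [hc.fderiv]
    rfl
  rw [h1, h1, hsymm]

lemma Dv_const_mul {G : EE → ℝ} {p : EE} (h : DifferentiableAt ℝ G p) (c : ℝ) (v : EE) :
    Dv v (fun q => c * G q) p = c * Dv v G p := by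
  unfold Dv; rw [fderiv_const_mul h c]; rfl

lemma Dv_mul {G H : EE → ℝ} {p : EE} (hG : DifferentiableAt ℝ G p)
    (hH : DifferentiableAt ℝ H p) (v : EE) :
    Dv v (fun q => G q * H q) p = Dv v G p * H p + G p * Dv v H p := by
  unfold Dv; rw [fderiv_fun_mul hG hH]; simp; ring

lemma Dv_sub {G H : EE → ℝ} {p : EE} (hG : DifferentiableAt ℝ G p)
    (hH : DifferentiableAt ℝ H p) (v : EE) :
    Dv v (fun q => G q - H q) p = Dv v G p - Dv v H p := by
  unfold Dv; rw [fderiv_fun_sub hG hH]; rfl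

lemma Dv_add {G H : EE → ℝ} {p : EE} (hG : DifferentiableAt ℝ G p)
    (hH : DifferentiableAt ℝ H p) (v : EE) :
    Dv v (fun q => G q + H q) p = Dv v G p + Dv v H p := by
  unfold Dv; rw [fderiv_fun_add hG hH]; rfl

lemma Dv_div_const {G : EE → ℝ} {p : EE} (h : DifferentiableAt ℝ G p) (c : ℝ) (v : EE) :
    Dv v (fun q => G q / c) p = Dv v G p / c := by
  have heq : (fun q => G q / c) = fun q => c⁻¹ * G q := by funext q; ring
  rw [heq, Dv_const_mul h]; ring

lemma Dv_sum {G : Fin 3 → EE → ℝ} {p : EE} (h : ∀ j, DifferentiableAt ℝ (G j) p) (v : EE) :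
    Dv v (fun q => ∑ j, G j q) p = ∑ j, Dv v (G j) p := by
  unfold Dv
  rw [fderiv_fun_sum (fun j _ => h j)]
  simp

lemma Dv_log {G : EE → ℝ} {p : EE} (h : DifferentiableAt ℝ G p) (hne : G p ≠ 0) (v : EE) :
    Dv v (fun q => Real.log (G q)) p = Dv v G p / G p := by
  unfold Dv
  rw [(h.hasFDerivAt.log hne).fderiv]
  simp [div_eq_inv_mul]

lemma Dv_comp_fst {V : (Fin 3 → ℝ) → ℝ} (hV : Differentiable ℝ V) (p : EE) (v : EE) :
    Dv v (fun q : EE => V q.1) p = fderiv ℝ V p.1 v.1 := by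
  unfold Dv
  have h : HasFDerivAt (fun q : EE => V q.1)
      ((fderiv ℝ V p.1).comp (ContinuousLinearMap.fst ℝ (Fin 3 → ℝ) ℝ)) p :=
    (hV p.1).hasFDerivAt.comp p hasFDerivAt_fst
  rw [h.fderiv]; rfl

lemma pt_neg_const_mul (c : ℝ) (f : (Fin 3 → ℝ) → ℝ → ℝ) (x : Fin 3 → ℝ) (t : ℝ) :
    pt (fun y s => -(c * f y s)) x t = -(c * pt f x t) := by
  unfold pt
  have heq : (fun s => -(c * f x s)) = fun s => (-c) * f x s := by funext s; ring
  show deriv (fun s => -(c * f x s)) t = -(c * deriv (f x) t)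
  rw [heq, deriv_const_mul_field]
  show -c * deriv (fun s => f x s) t = _
  ring

lemma pd_neg_const_mul (c : ℝ) (f : (Fin 3 → ℝ) → ℝ → ℝ) (x : Fin 3 → ℝ) (t : ℝ) (i : Fin 3) :
    pd i (fun y s => -(c * f y s)) x t = -(c * pd i f x t) := by
  unfold pd
  have heq : (fun s => -(c * f (Function.update x i s) t))
      = fun s => (-c) * f (Function.update x i s) t := by funext s; ring
  rw [heq, deriv_const_mul_field]
  ring

/-- **Backward stochastic Euler–Lagrange equation** (case `A = 0`).  If `η* > 0` is smooth
on `ℝ³ × I` and solves the adjoint (forward) heat equation with potential `V`,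
`−ħ ∂η*/∂t = −(ħ²/2)Δη* + Vη*`, then the backward drift `B* := −ħ∇log η*` satisfies
`∂B*/∂t + (B*·∇)B* − (ħ/2)ΔB* = ∇V`. -/
theorem backward_stochastic_euler_lagrange
    (hbar : ℝ) (hhbar : 0 < hbar)
    (V : (Fin 3 → ℝ) → ℝ) (hV : ContDiff ℝ (⊤ : ℕ∞) V)
    (I : Set ℝ) (hI : IsOpen I)
    (ηstar : (Fin 3 → ℝ) → ℝ → ℝ)
    (hsmooth : ContDiffOn ℝ (⊤ : ℕ∞) (fun p : (Fin 3 → ℝ) × ℝ => ηstar p.1 p.2) (univ ×ˢ I))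
    (hpos : ∀ x, ∀ t ∈ I, 0 < ηstar x t)
    (hPDE : ∀ x, ∀ t ∈ I,
      -(hbar * pt ηstar x t) = -(hbar ^ 2 / 2) * lap ηstar x t + V x * ηstar x t)
    (Bstar : (Fin 3 → ℝ) → ℝ → Fin 3 → ℝ)
    (hBstar : ∀ x t i, Bstar x t i = -(hbar * pd i (fun y s => Real.log (ηstar y s)) x t)) :
    ∀ x, ∀ t ∈ I, ∀ i,
      pt (fun y s => Bstar y s i) x t
        + (∑ j, Bstar x t j * pd j (fun y s => Bstar y s i) x t)
        - (hbar / 2) * lap (fun y s => Bstar y s i) x t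
      = pds i V x := by
  intro x t ht i
  have hb0 : hbar ≠ 0 := ne_of_gt hhbar
  set U : Set EE := univ ×ˢ I with hUdef
  have hU : IsOpen U := isOpen_univ.prod hI
  have hpU : ((x, t) : EE) ∈ U := ⟨mem_univ _, ht⟩
  set F : EE → ℝ := fun q => ηstar q.1 q.2 with hFdef
  have hFs : ContDiffOn ℝ (⊤:ℕ∞) F U := hsmooth
  have hFpos : ∀ q ∈ U, 0 < F q := fun q hq => hpos q.1 q.2 hq.2
  set L : EE → ℝ := fun q => Real.log (F q) with hLdef
  have hLs : ContDiffOn ℝ (⊤:ℕ∞) L U := hFs.log (fun q hq => (hFpos q hq).ne')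
  -- differentiability helpers
  have hFd : ∀ q ∈ U, DifferentiableAt ℝ F q := fun q hq => diffAt_of_smoothOn hU hFs hq
  have hLd : ∀ q ∈ U, DifferentiableAt ℝ L q := fun q hq => diffAt_of_smoothOn hU hLs hq
  have hL1s : ∀ a : EE, ContDiffOn ℝ (⊤:ℕ∞) (Dv a L) U := fun a => Dv_smoothOn hU hLs a
  have hL2s : ∀ a b : EE, ContDiffOn ℝ (⊤:ℕ∞) (Dv b (Dv a L)) U :=
    fun a b => Dv_smoothOn hU (hL1s a) b
  have hF1s : ∀ a : EE, ContDiffOn ℝ (⊤:ℕ∞) (Dv a F) U := fun a => Dv_smoothOn hU hFs a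
  have hL1d : ∀ a : EE, ∀ q ∈ U, DifferentiableAt ℝ (Dv a L) q :=
    fun a q hq => diffAt_of_smoothOn hU (hL1s a) hq
  have hL2d : ∀ a b : EE, ∀ q ∈ U, DifferentiableAt ℝ (Dv b (Dv a L)) q :=
    fun a b q hq => diffAt_of_smoothOn hU (hL2s a b) hq
  have hF1d : ∀ a : EE, ∀ q ∈ U, DifferentiableAt ℝ (Dv a F) q :=
    fun a q hq => diffAt_of_smoothOn hU (hF1s a) hq
  have hVdiff : Differentiable ℝ V := hV.differentiable (by simp)
  -- basic translation identities on U
  have E1 : ∀ (j : Fin 3), ∀ q ∈ U,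
      pd j (fun y s => Real.log (ηstar y s)) q.1 q.2 = Dv (ve j) L q := by
    intro j q hq
    exact pd_eq (x := q.1) (t := q.2) (by exact hLd q hq) j
  have EF1 : ∀ (j : Fin 3), ∀ q ∈ U, pd j ηstar q.1 q.2 = Dv (ve j) F q := by
    intro j q hq
    exact pd_eq (x := q.1) (t := q.2) (by exact hFd q hq) j
  have EFt : ∀ q ∈ U, pt ηstar q.1 q.2 = Dv wt F q := by
    intro q hq
    exact pt_eq (x := q.1) (t := q.2) (by exact hFd q hq)
  have EF2 : ∀ (j : Fin 3), ∀ q ∈ U,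
      pd j (pd j ηstar) q.1 q.2 = Dv (ve j) (Dv (ve j) F) q := by
    intro j q hq
    have h1 : pd j (fun y s => pd j ηstar y s) q.1 q.2
        = pd j (fun y s => Dv (ve j) F (y, s)) q.1 q.2 :=
      pd_congr hU (by exact hq) (EF1 j) j
    have h2 : pd j (fun y s => Dv (ve j) F (y, s)) q.1 q.2 = Dv (ve j) (Dv (ve j) F) q :=
      pd_eq (by exact hF1d (ve j) q hq) j
    exact h1.trans h2
  -- chain rule: Dv a F = F * Dv a L on U
  have CR : ∀ (a : EE), ∀ q ∈ U, Dv a F q = F q * Dv a L q := by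
    intro a q hq
    have h := Dv_log (hFd q hq) (hFpos q hq).ne' a
    have : Dv a L q = Dv a F q / F q := h
    rw [this]
    field_simp [(hFpos q hq).ne']
  -- the PDE in directional-derivative form
  have PDE' : ∀ q ∈ U, -(hbar * Dv wt F q)
      = -(hbar ^ 2 / 2) * (∑ j, Dv (ve j) (Dv (ve j) F) q) + V q.1 * F q := by
    intro q hq
    have h := hPDE q.1 q.2 hq.2
    rw [EFt q hq] at h
    have hlap : lap ηstar q.1 q.2 = ∑ j, Dv (ve j) (Dv (ve j) F) q :=
      Finset.sum_congr rfl (fun j _ => EF2 j q hq)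
    rw [hlap] at h
    exact h
  -- second derivative conversion
  have C1 : ∀ (j : Fin 3), ∀ q ∈ U, Dv (ve j) (Dv (ve j) F) q
      = F q * (Dv (ve j) (Dv (ve j) L) q + Dv (ve j) L q * Dv (ve j) L q) := by
    intro j q hq
    have h1 : Dv (ve j) (Dv (ve j) F) q = Dv (ve j) (fun r => F r * Dv (ve j) L r) q :=
      Dv_congr hU hq (fun r hr => CR (ve j) r hr) (ve j)
    rw [h1, Dv_mul (hFd q hq) (hL1d (ve j) q hq), CR (ve j) q hq]
    ring
  -- Hamilton–Jacobi equation for L on U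
  have HJ : ∀ q ∈ U, Dv wt L q
      = (hbar / 2) * (∑ j, (Dv (ve j) (Dv (ve j) L) q + Dv (ve j) L q * Dv (ve j) L q))
        - V q.1 / hbar := by
    intro q hq
    have h := PDE' q hq
    rw [CR wt q hq] at h
    have hsum : (∑ j, Dv (ve j) (Dv (ve j) F) q)
        = F q * ∑ j, (Dv (ve j) (Dv (ve j) L) q + Dv (ve j) L q * Dv (ve j) L q) := by
      rw [Finset.mul_sum]
      exact Finset.sum_congr rfl (fun j _ => C1 j q hq)
    rw [hsum] at h
    have hF0 : F q ≠ 0 := (hFpos q hq).ne'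
    field_simp
    have h2 : F q * (Dv wt L q * (2 * hbar))
        = F q * (hbar ^ 2 * (∑ j, (Dv (ve j) (Dv (ve j) L) q + Dv (ve j) L q * Dv (ve j) L q))
            - V q.1 * 2) := by ring_nf; ring_nf at h; linarith
    have := mul_left_cancel₀ hF0 h2
    simp only [sq] at this ⊢
    linarith
  -- notation for derivative values at p = (x, t)
  set p : EE := ((x, t) : EE) with hpdef
  -- differentiate HJ in direction ve i
  have sumdiff : ∀ q ∈ U, DifferentiableAt ℝ
      (fun r => ∑ j, (Dv (ve j) (Dv (ve j) L) r + Dv (ve j) L r * Dv (ve j) L r)) q := by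
    intro q hq
    exact DifferentiableAt.fun_sum (fun j _ =>
      ((hL2d (ve j) (ve j) q hq).fun_add ((hL1d (ve j) q hq).fun_mul (hL1d (ve j) q hq))))
  have HJd : Dv wt (Dv (ve i) L) p
      = (hbar / 2) * (∑ j, (Dv (ve j) (Dv (ve j) (Dv (ve i) L)) p
            + 2 * Dv (ve j) L p * Dv (ve j) (Dv (ve i) L) p))
        - fderiv ℝ V x (Pi.single i 1) / hbar := by
    have h0 : Dv wt (Dv (ve i) L) p = Dv (ve i) (Dv wt L) p :=
      (Dv_comm hU hLs hpU (ve i) wt).symm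
    have h1 : Dv (ve i) (Dv wt L) p = Dv (ve i)
        (fun q => (hbar / 2) * (∑ j, (Dv (ve j) (Dv (ve j) L) q
            + Dv (ve j) L q * Dv (ve j) L q)) - V q.1 / hbar) p :=
      Dv_congr hU hpU HJ (ve i)
    have hd1 : DifferentiableAt ℝ (fun q : EE => (hbar / 2) * (∑ j, (Dv (ve j) (Dv (ve j) L) q
        + Dv (ve j) L q * Dv (ve j) L q))) p := (sumdiff p hpU).const_mul _
    have hVp : DifferentiableAt ℝ (fun q : EE => V q.1) p :=
      DifferentiableAt.comp p (hVdiff p.1) differentiableAt_fst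
    have hd2 : DifferentiableAt ℝ (fun q : EE => V q.1 / hbar) p := by
      simpa [div_eq_mul_inv] using hVp.mul_const hbar⁻¹
    rw [h0, h1, Dv_sub hd1 hd2, Dv_const_mul (sumdiff p hpU),
      Dv_div_const hVp,
      Dv_comp_fst hVdiff p (ve i)]
    have hsum2 : Dv (ve i) (fun q => ∑ j, (Dv (ve j) (Dv (ve j) L) q
        + Dv (ve j) L q * Dv (ve j) L q)) p
        = ∑ j, (Dv (ve j) (Dv (ve j) (Dv (ve i) L)) p
            + 2 * Dv (ve j) L p * Dv (ve j) (Dv (ve i) L) p) := by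
      rw [Dv_sum (fun j => (hL2d (ve j) (ve j) p hpU).fun_add
        ((hL1d (ve j) p hpU).fun_mul (hL1d (ve j) p hpU)))]
      apply Finset.sum_congr rfl
      intro j _
      rw [Dv_add (hL2d (ve j) (ve j) p hpU) ((hL1d (ve j) p hpU).fun_mul (hL1d (ve j) p hpU)),
        Dv_mul (hL1d (ve j) p hpU) (hL1d (ve j) p hpU)]
      -- now swap derivative orders
      have s1 : Dv (ve i) (Dv (ve j) (Dv (ve j) L)) p = Dv (ve j) (Dv (ve i) (Dv (ve j) L)) p :=
        Dv_comm hU (hL1s (ve j)) hpU (ve i) (ve j)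
      have s2 : Dv (ve j) (Dv (ve i) (Dv (ve j) L)) p = Dv (ve j) (Dv (ve j) (Dv (ve i) L)) p :=
        Dv_congr hU hpU (fun q hq => Dv_comm hU hLs hq (ve i) (ve j)) (ve j)
      have s3 : Dv (ve i) (Dv (ve j) L) p = Dv (ve j) (Dv (ve i) L) p :=
        Dv_comm hU hLs hpU (ve i) (ve j)
      rw [s1, s2, s3]
      ring
    rw [hsum2]
    rfl
  -- translate the goal quantities
  have hBfun : ∀ k : Fin 3, (fun y s => Bstar y s k)
      = (fun y s => -(hbar * pd k (fun y' s' => Real.log (ηstar y' s')) y s)) := by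
    intro k; funext y s; exact hBstar y s k
  have E1' : ∀ (j : Fin 3) (x' : Fin 3 → ℝ) (t' : ℝ), ((x', t') : EE) ∈ U →
      pd j (fun y s => Real.log (ηstar y s)) x' t' = Dv (ve j) L (x', t') :=
    fun j x' t' h => E1 j (x', t') h
  have key_dq : ∀ (k : Fin 3) (x' : Fin 3 → ℝ) (t' : ℝ), ((x', t') : EE) ∈ U →
      pd k (fun y s => pd i (fun y' s' => Real.log (ηstar y' s')) y s) x' t'
        = Dv (ve k) (Dv (ve i) L) (x', t') := by
    intro k x' t' h
    have h1 : pd k (fun y s => pd i (fun y' s' => Real.log (ηstar y' s')) y s) x' t'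
        = pd k (fun y s => Dv (ve i) L (y, s)) x' t' :=
      pd_congr hU h (fun q hq => E1 i q hq) k
    exact h1.trans (pd_eq (hL1d (ve i) (x', t') h) k)
  have key_t : pt (fun y s => pd i (fun y' s' => Real.log (ηstar y' s')) y s) x t
      = Dv wt (Dv (ve i) L) p := by
    have h1 : pt (fun y s => pd i (fun y' s' => Real.log (ηstar y' s')) y s) x t
        = pt (fun y s => Dv (ve i) L (y, s)) x t :=
      pt_congr hU hpU (fun q hq => E1 i q hq)
    exact h1.trans (pt_eq (hL1d (ve i) p hpU))
  have T1 : pt (fun y s => Bstar y s i) x t = -(hbar * Dv wt (Dv (ve i) L) p) := by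
    rw [hBfun i]
    have e : pt (fun y s => -(hbar * pd i (fun y' s' => Real.log (ηstar y' s')) y s)) x t
        = -(hbar * pt (fun y s => pd i (fun y' s' => Real.log (ηstar y' s')) y s) x t) :=
      pt_neg_const_mul hbar _ x t
    rw [e, key_t]
  have T2 : ∀ k : Fin 3, pd k (fun y s => Bstar y s i) x t
      = -(hbar * Dv (ve k) (Dv (ve i) L) p) := by
    intro k
    rw [hBfun i]
    have e : pd k (fun y s => -(hbar * pd i (fun y' s' => Real.log (ηstar y' s')) y s)) x t
        = -(hbar * pd k (fun y s => pd i (fun y' s' => Real.log (ηstar y' s')) y s) x t) :=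
      pd_neg_const_mul hbar _ x t k
    rw [e, key_dq k x t hpU]
  have T3 : lap (fun y s => Bstar y s i) x t
      = ∑ k, -(hbar * Dv (ve k) (Dv (ve k) (Dv (ve i) L)) p) := by
    show (∑ k, pd k (pd k (fun y s => Bstar y s i)) x t) = _
    apply Finset.sum_congr rfl
    intro k _
    have hfun : pd k (fun y s => Bstar y s i)
        = fun y' t' => -(hbar * pd k (fun y s =>
            pd i (fun y'' s'' => Real.log (ηstar y'' s'')) y s) y' t') := by
      funext y' t'
      rw [hBfun i]
      exact pd_neg_const_mul hbar _ y' t' k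
    rw [hfun]
    have e2 : pd k (fun y' t' => -(hbar * pd k (fun y s =>
          pd i (fun y'' s'' => Real.log (ηstar y'' s'')) y s) y' t')) x t
        = -(hbar * pd k (fun y' t' => pd k (fun y s =>
            pd i (fun y'' s'' => Real.log (ηstar y'' s'')) y s) y' t') x t) :=
      pd_neg_const_mul hbar _ x t k
    rw [e2]
    have e3 : pd k (fun y' t' => pd k (fun y s =>
          pd i (fun y'' s'' => Real.log (ηstar y'' s'')) y s) y' t') x t
        = Dv (ve k) (Dv (ve k) (Dv (ve i) L)) p := by
      have hc : pd k (fun y' t' => pd k (fun y s =>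
            pd i (fun y'' s'' => Real.log (ηstar y'' s'')) y s) y' t') x t
          = pd k (fun y' t' => Dv (ve k) (Dv (ve i) L) (y', t')) x t :=
        pd_congr hU hpU (fun q hq => key_dq k q.1 q.2 (by exact hq)) k
      exact hc.trans (pd_eq (hL2d (ve i) (ve k) p hpU) k)
    rw [e3]
  have T2' : (∑ j, Bstar x t j * pd j (fun y s => Bstar y s i) x t)
      = ∑ j, hbar ^ 2 * (Dv (ve j) L p * Dv (ve j) (Dv (ve i) L) p) := by
    apply Finset.sum_congr rfl
    intro j _
    rw [hBstar x t j, T2 j, E1' j x t hpU]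
    ring
  -- final algebra
  rw [T1, T2', T3, pds_eq (hVdiff x) i, HJd]
  rw [Finset.sum_add_distrib]
  have hs1 : (∑ j, hbar ^ 2 * (Dv (ve j) L p * Dv (ve j) (Dv (ve i) L) p))
      = hbar ^ 2 * ∑ j, Dv (ve j) L p * Dv (ve j) (Dv (ve i) L) p := by
    rw [Finset.mul_sum]
  have hs2 : (∑ j, 2 * Dv (ve j) L p * Dv (ve j) (Dv (ve i) L) p)
      = 2 * ∑ j, Dv (ve j) L p * Dv (ve j) (Dv (ve i) L) p := by
    rw [Finset.mul_sum]
    exact Finset.sum_congr rfl (fun j _ => by ring)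
  have hs3 : (∑ k, -(hbar * Dv (ve k) (Dv (ve k) (Dv (ve i) L)) p))
      = -(hbar * ∑ k, Dv (ve k) (Dv (ve k) (Dv (ve i) L)) p) := by
    rw [Finset.mul_sum, ← Finset.sum_neg_distrib]
  rw [hs1, hs2, hs3]
  field_simp
  ring
end
end

section
/- Let ħ > 0, let V : ℝ³ → ℝ and A : ℝ³ → ℝ³ be smooth, and on an open time interval I let η, η* : ℝ³ × I → ℝ be smooth strictly positive functions satisfying respectively ħ ∂η/∂t = −(ħ²/2)Δη + ħ A·∇η + (ħ/2)(∇·A)η − (1/2)|A|²η + V η and −ħ ∂η*/∂t = −(ħ²/2)Δη* − ħ A·∇η* − (ħ/2)(∇·A)η* − (1/2)|A|²η* + V η*. Define the forward drift B := ħ∇log η − A and the backward drift B* := −ħ∇log η* − A. Then for each component i = 1,2,3: (1/2)[(∂/∂t + B·∇ + (ħ/2)Δ)B_i + (∂/∂t + B*·∇ − (ħ/2)Δ)B*_i] = (1/2) Σ_j (B_j + B*_j)(∂A_j/∂x_i − ∂A_i/∂x_j) + ∂V/∂x_i. -/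
open MeasureTheory Real Set

noncomputable section

namespace StochNewton

abbrev Pt : Type := (Fin 3 → ℝ) × ℝ

def ee (i : Fin 3) : Pt := (Pi.single i 1, 0)
def tv : Pt := (0, 1)
def dd (v : Pt) (F : Pt → ℝ) (q : Pt) : ℝ := fderiv ℝ F q v
def ds (i : Fin 3) (g : (Fin 3 → ℝ) → ℝ) (y : Fin 3 → ℝ) : ℝ := fderiv ℝ g y (Pi.single i 1)

lemma hasDerivAt_update (x : Fin 3 → ℝ) (i : Fin 3) (r : ℝ) :
    HasDerivAt (fun s => Function.update x i s) (Pi.single i 1 : Fin 3 → ℝ) r := by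
  have h : (fun s : ℝ => Function.update x i s)
      = fun s : ℝ => x + (s - x i) • (Pi.single i 1 : Fin 3 → ℝ) := by
    funext s
    funext j
    rcases eq_or_ne j i with rfl | hj
    · simp
    · simp [Function.update_apply, hj, Pi.single_eq_of_ne hj]
  rw [h]
  simpa using (((hasDerivAt_id r).sub_const (x i)).smul_const
    (Pi.single i 1 : Fin 3 → ℝ)).const_add x

lemma hd_satom {g : (Fin 3 → ℝ) → ℝ} {x : Fin 3 → ℝ} (i : Fin 3)
    (hg : DifferentiableAt ℝ g x) :
    HasDerivAt (fun s => g (Function.update x i s)) (ds i g x) (x i) := by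
  have hg' : HasFDerivAt g (fderiv ℝ g x) (Function.update x i (x i)) := by
    rw [Function.update_eq_self]; exact hg.hasFDerivAt
  exact hg'.comp_hasDerivAt (x i) (hasDerivAt_update x i (x i))

lemma hd_atom {F : Pt → ℝ} {x : Fin 3 → ℝ} {t : ℝ} (i : Fin 3)
    (hF : DifferentiableAt ℝ F (x, t)) :
    HasDerivAt (fun s => F (Function.update x i s, t)) (dd (ee i) F (x, t)) (x i) := by
  have hF' : HasFDerivAt F (fderiv ℝ F (x, t)) (Function.update x i (x i), t) := by
    rw [Function.update_eq_self]; exact hF.hasFDerivAt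
  exact hF'.comp_hasDerivAt (x i)
    (HasDerivAt.prodMk (hasDerivAt_update x i (x i)) (hasDerivAt_const (x i) t))

lemma hd_tatom {F : Pt → ℝ} {x : Fin 3 → ℝ} {t : ℝ}
    (hF : DifferentiableAt ℝ F (x, t)) :
    HasDerivAt (fun s => F (x, s)) (dd tv F (x, t)) t :=
  hF.hasFDerivAt.comp_hasDerivAt t (HasDerivAt.prodMk (hasDerivAt_const t x) (hasDerivAt_id t))

lemma pd_eq {f : (Fin 3 → ℝ) → ℝ → ℝ} {x : Fin 3 → ℝ} {t : ℝ} (i : Fin 3)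
    (hF : DifferentiableAt ℝ (fun q : Pt => f q.1 q.2) (x, t)) :
    pd i f x t = dd (ee i) (fun q : Pt => f q.1 q.2) (x, t) :=
  (hd_atom i hF).deriv

lemma pt_eq {f : (Fin 3 → ℝ) → ℝ → ℝ} {x : Fin 3 → ℝ} {t : ℝ}
    (hF : DifferentiableAt ℝ (fun q : Pt => f q.1 q.2) (x, t)) :
    pt f x t = dd tv (fun q : Pt => f q.1 q.2) (x, t) :=
  (hd_tatom hF).deriv

lemma pds_eq {g : (Fin 3 → ℝ) → ℝ} {x : Fin 3 → ℝ} (i : Fin 3)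
    (hg : DifferentiableAt ℝ g x) : pds i g x = ds i g x :=
  (hd_satom i hg).deriv

lemma pd_congr {f g : (Fin 3 → ℝ) → ℝ → ℝ} {I : Set ℝ} {t : ℝ} (ht : t ∈ I)
    (h : ∀ y, ∀ s ∈ I, f y s = g y s) (i : Fin 3) (x : Fin 3 → ℝ) :
    pd i f x t = pd i g x t := by
  unfold pd; congr 1; funext s; exact h _ _ ht

lemma pt_congr {f g : (Fin 3 → ℝ) → ℝ → ℝ} {I : Set ℝ} (hI : IsOpen I) {t : ℝ} (ht : t ∈ I)
    (h : ∀ y, ∀ s ∈ I, f y s = g y s) (x : Fin 3 → ℝ) :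
    pt f x t = pt g x t := by
  unfold pt
  apply Filter.EventuallyEq.deriv_eq
  filter_upwards [hI.mem_nhds ht] with s hs
  exact h x s hs

lemma dd_congr_nhds {F G : Pt → ℝ} {q : Pt} (h : ∀ᶠ r in nhds q, F r = G r) (v : Pt) :
    dd v F q = dd v G q := by
  unfold dd
  rw [Filter.EventuallyEq.fderiv_eq h]

lemma dd_dd {F : Pt → ℝ} {q : Pt} (hF : DifferentiableAt ℝ (fderiv ℝ F) q) (v w : Pt) :
    dd v (dd w F) q = fderiv ℝ (fderiv ℝ F) q v w := by
  unfold dd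
  have h : (fun r => fderiv ℝ F r w) = fun r => (fderiv ℝ F r) ((fun _ : Pt => w) r) := rfl
  rw [h, fderiv_clm_apply hF (differentiableAt_const w)]
  simp

lemma contDiffAt_dd {F : Pt → ℝ} {q : Pt} {n : ℕ} (hF : ContDiffAt ℝ (n + 1 : ℕ) F q) (v : Pt) :
    ContDiffAt ℝ n (dd v F) q := by
  have h1 : ContDiffAt ℝ n (fderiv ℝ F) q := hF.fderiv_right (by exact_mod_cast le_rfl)
  exact (ContinuousLinearMap.apply ℝ ℝ v).contDiff.contDiffAt.comp q h1

lemma schwarz {F : Pt → ℝ} {q : Pt} (hF : ContDiffAt ℝ 2 F q) (v w : Pt) :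
    dd v (dd w F) q = dd w (dd v F) q := by
  have hd : DifferentiableAt ℝ (fderiv ℝ F) q :=
    (hF.fderiv_right (m := 1) (by norm_num)).differentiableAt (by norm_num)
  rw [dd_dd hd, dd_dd hd]
  exact (hF.isSymmSndFDerivAt (by simp)) v w

lemma dd_comb {hbar eps : ℝ} {X : Pt → ℝ} {g : (Fin 3 → ℝ) → ℝ} {q : Pt}
    (hX : DifferentiableAt ℝ X q) (hg : DifferentiableAt ℝ g q.1) (v : Pt) :
    dd v (fun r => eps * (hbar * X r) - g r.1) q
      = eps * (hbar * dd v X q) - fderiv ℝ g q.1 v.1 := by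
  have h1 : HasFDerivAt (fun r : Pt => g r.1)
      ((fderiv ℝ g q.1).comp (ContinuousLinearMap.fst ℝ (Fin 3 → ℝ) ℝ)) q :=
    hg.hasFDerivAt.comp q hasFDerivAt_fst
  have h2 := ((hX.hasFDerivAt.const_mul hbar).const_mul eps).sub h1
  unfold dd
  rw [HasFDerivAt.fderiv (f := fun r => eps * (hbar * X r) - g r.1) h2]
  simp [mul_assoc]

lemma diff_comb {hbar eps : ℝ} {X : Pt → ℝ} {g : (Fin 3 → ℝ) → ℝ} {q : Pt}
    (hX : DifferentiableAt ℝ X q) (hg : DifferentiableAt ℝ g q.1) :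
    DifferentiableAt ℝ (fun r : Pt => eps * (hbar * X r) - g r.1) q :=
  ((hX.const_mul hbar).const_mul eps).sub (hg.comp q differentiableAt_fst)

lemma contDiff_ds {g : (Fin 3 → ℝ) → ℝ} (hg : ContDiff ℝ (⊤ : ℕ∞) g) (i : Fin 3) :
    ContDiff ℝ (⊤ : ℕ∞) (ds i g) := by
  have h1 : ContDiff ℝ (⊤ : ℕ∞) (fderiv ℝ g) := hg.fderiv_right (by exact_mod_cast le_top)
  exact (ContinuousLinearMap.apply ℝ ℝ (Pi.single i 1)).contDiff.comp h1

lemma dd_log {Z : Pt → ℝ} {q : Pt} (hZ : DifferentiableAt ℝ Z q) (hz : Z q ≠ 0) (v : Pt) :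
    dd v (fun r => Real.log (Z r)) q = dd v Z q / Z q := by
  have hlog : HasFDerivAt (fun r => Real.log (Z r)) ((Z q)⁻¹ • fderiv ℝ Z q) q :=
    (Real.hasDerivAt_log hz).comp_hasFDerivAt q hZ.hasFDerivAt
  unfold dd
  rw [hlog.fderiv]
  simp [div_eq_inv_mul]

lemma dd_dd_log {Z : Pt → ℝ} {U : Set Pt} (hU : IsOpen U) {q : Pt} (hq : q ∈ U)
    (hZ : ∀ n : ℕ, ∀ r ∈ U, ContDiffAt ℝ n Z r) (hz : ∀ r ∈ U, 0 < Z r) (v : Pt) :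
    dd v (dd v (fun r => Real.log (Z r))) q
      = dd v (dd v Z) q / Z q - (dd v Z q / Z q) ^ 2 := by
  have hev : ∀ᶠ r in nhds q, dd v (fun r' => Real.log (Z r')) r = dd v Z r * (Z r)⁻¹ := by
    filter_upwards [hU.mem_nhds hq] with r hr
    rw [dd_log ((hZ 1 r hr).differentiableAt (by simp))
      (ne_of_gt (hz r hr)), div_eq_mul_inv]
  rw [dd_congr_nhds hev]
  have h1 : DifferentiableAt ℝ (dd v Z) q :=
    (contDiffAt_dd (hZ 2 q hq) v).differentiableAt (by simp)
  have hZd : DifferentiableAt ℝ Z q := (hZ 1 q hq).differentiableAt (by simp)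
  have hzq : Z q ≠ 0 := ne_of_gt (hz q hq)
  have h2 : HasFDerivAt (fun r => (Z r)⁻¹) ((-(Z q ^ 2)⁻¹) • fderiv ℝ Z q) q :=
    (hasDerivAt_inv hzq).comp_hasFDerivAt q hZd.hasFDerivAt
  have h3 := h1.hasFDerivAt.mul h2
  rw [show dd v (fun r => dd v Z r * (Z r)⁻¹) q
      = (fderiv ℝ (fun r => dd v Z r * (Z r)⁻¹) q) v from rfl, HasFDerivAt.fderiv (f := fun r => dd v Z r * (Z r)⁻¹) h3]
  simp only [ContinuousLinearMap.add_apply, ContinuousLinearMap.smul_apply, smul_eq_mul]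
  have e1 : fderiv ℝ (dd v Z) q v = dd v (dd v Z) q := rfl
  have e2 : fderiv ℝ Z q v = dd v Z q := rfl
  rw [e1, e2]
  field_simp
  ring



lemma gpde (hbar eps : ℝ)
    (V : (Fin 3 → ℝ) → ℝ)
    (A : (Fin 3 → ℝ) → Fin 3 → ℝ) (hA : ContDiff ℝ (⊤ : ℕ∞) A)
    (I : Set ℝ) (hI : IsOpen I)
    (ζ : (Fin 3 → ℝ) → ℝ → ℝ)
    (hζ : ContDiffOn ℝ (⊤ : ℕ∞) (fun p : Pt => ζ p.1 p.2) (univ ×ˢ I))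
    (hpos : ∀ x, ∀ t ∈ I, 0 < ζ x t)
    (hPDE : ∀ x, ∀ t ∈ I,
      eps * (hbar * pt ζ x t) =
        -(hbar ^ 2 / 2) * lap ζ x t + eps * (hbar * (∑ j, A x j * pd j ζ x t))
          + eps * ((hbar / 2) * (∑ j, pds j (fun y => A y j) x) * ζ x t)
          - (1 / 2) * (∑ j, (A x j) ^ 2) * ζ x t + V x * ζ x t) :
    ∀ y, ∀ s ∈ I,
      eps * (hbar * dd tv (fun q : Pt => Real.log (ζ q.1 q.2)) (y, s)) =
        -(hbar ^ 2 / 2) *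
            ((∑ j, dd (ee j) (dd (ee j) (fun q : Pt => Real.log (ζ q.1 q.2))) (y, s))
              + ∑ j, (dd (ee j) (fun q : Pt => Real.log (ζ q.1 q.2)) (y, s)) ^ 2)
          + eps * (hbar * ∑ j, A y j * dd (ee j) (fun q : Pt => Real.log (ζ q.1 q.2)) (y, s))
          + eps * ((hbar / 2) * ∑ j, ds j (fun z => A z j) y)
          - (1 / 2) * ∑ j, (A y j) ^ 2 + V y := by
  intro y s hs
  have hU : IsOpen ((univ : Set (Fin 3 → ℝ)) ×ˢ I) := isOpen_univ.prod hI
  have hq : ((y, s) : Pt) ∈ (univ : Set (Fin 3 → ℝ)) ×ˢ I := ⟨mem_univ y, hs⟩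
  have hmem : ∀ (y' : Fin 3 → ℝ) (s' : ℝ), s' ∈ I →
      ((y', s') : Pt) ∈ (univ : Set (Fin 3 → ℝ)) ×ˢ I := fun y' s' hs' => ⟨mem_univ y', hs'⟩
  have hZn : ∀ (n : ℕ) (r : Pt), r ∈ (univ : Set (Fin 3 → ℝ)) ×ˢ I →
      ContDiffAt ℝ n (fun q : Pt => ζ q.1 q.2) r := fun n r hr =>
    (hζ.contDiffAt (hU.mem_nhds hr)).of_le (by exact_mod_cast le_top)
  have hZpos : ∀ r ∈ (univ : Set (Fin 3 → ℝ)) ×ˢ I, 0 < (fun q : Pt => ζ q.1 q.2) r :=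
    fun r hr => hpos r.1 r.2 hr.2
  have hZd : ∀ r ∈ (univ : Set (Fin 3 → ℝ)) ×ˢ I, DifferentiableAt ℝ (fun q : Pt => ζ q.1 q.2) r :=
    fun r hr => (hZn 1 r hr).differentiableAt (by simp)
  have hz : ζ y s ≠ 0 := ne_of_gt (hpos y s hs)
  -- conversions of the PDE to fderiv language
  have h1 : pt ζ y s = dd tv (fun q : Pt => ζ q.1 q.2) (y, s) := pt_eq (hZd _ hq)
  have h2 : ∀ j, pd j ζ y s = dd (ee j) (fun q : Pt => ζ q.1 q.2) (y, s) :=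
    fun j => pd_eq j (hZd _ hq)
  have h3 : lap ζ y s = ∑ j, dd (ee j) (dd (ee j) (fun q : Pt => ζ q.1 q.2)) (y, s) := by
    unfold lap
    refine Finset.sum_congr rfl (fun j _ => ?_)
    have hinner : ∀ y', ∀ s' ∈ I, pd j ζ y' s'
        = dd (ee j) (fun q : Pt => ζ q.1 q.2) (y', s') :=
      fun y' s' hs' => pd_eq j (hZd _ (hmem y' s' hs'))
    rw [pd_congr hs hinner j y]
    have hdiff : DifferentiableAt ℝ
        (fun q : Pt => dd (ee j) (fun q : Pt => ζ q.1 q.2) (q.1, q.2)) (y, s) := by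
      have := (contDiffAt_dd (n := 1) (hZn 2 _ hq) (ee j)).differentiableAt
        (by simp)
      simpa using this
    have := pd_eq (f := fun y' s' => dd (ee j) (fun q : Pt => ζ q.1 q.2) (y', s'))
      (x := y) (t := s) j hdiff
    rw [this]
  have hAj : ∀ j : Fin 3, Differentiable ℝ (fun y' => A y' j) := by
    intro j
    have h := ((ContinuousLinearMap.proj (R := ℝ) (φ := fun _ : Fin 3 => ℝ)
      j).contDiff.comp hA).differentiable (by simp)
    exact h
  have h4 : ∀ j, pds j (fun y' => A y' j) y = ds j (fun y' => A y' j) y := fun j =>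
    pds_eq j ((hAj j) y)
  -- log derivatives
  have hlogt : dd tv (fun q : Pt => Real.log (ζ q.1 q.2)) (y, s)
      = dd tv (fun q : Pt => ζ q.1 q.2) (y, s) / ζ y s :=
    dd_log (hZd _ hq) hz tv
  have hlogj : ∀ j, dd (ee j) (fun q : Pt => Real.log (ζ q.1 q.2)) (y, s)
      = dd (ee j) (fun q : Pt => ζ q.1 q.2) (y, s) / ζ y s :=
    fun j => dd_log (hZd _ hq) hz (ee j)
  have hlogjj : ∀ j, dd (ee j) (dd (ee j) (fun q : Pt => Real.log (ζ q.1 q.2))) (y, s)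
      = dd (ee j) (dd (ee j) (fun q : Pt => ζ q.1 q.2)) (y, s) / ζ y s
        - (dd (ee j) (fun q : Pt => ζ q.1 q.2) (y, s) / ζ y s) ^ 2 :=
    fun j => dd_dd_log hU hq hZn hZpos (ee j)
  have hE := hPDE y s hs
  rw [h1, h3] at hE
  rw [show (∑ j, A y j * pd j ζ y s)
      = ∑ j, A y j * dd (ee j) (fun q : Pt => ζ q.1 q.2) (y, s) from
    Finset.sum_congr rfl (fun j _ => by rw [h2 j])] at hE
  rw [show (∑ j, pds j (fun y' => A y' j) y) = ∑ j, ds j (fun y' => A y' j) y from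
    Finset.sum_congr rfl (fun j _ => by rw [h4 j])] at hE
  rw [hlogt]
  rw [show (∑ j, dd (ee j) (dd (ee j) (fun q : Pt => Real.log (ζ q.1 q.2))) (y, s))
      = ∑ j, (dd (ee j) (dd (ee j) (fun q : Pt => ζ q.1 q.2)) (y, s) / ζ y s
        - (dd (ee j) (fun q : Pt => ζ q.1 q.2) (y, s) / ζ y s) ^ 2) from
    Finset.sum_congr rfl (fun j _ => by rw [hlogjj j])]
  rw [show (∑ j, (dd (ee j) (fun q : Pt => Real.log (ζ q.1 q.2)) (y, s)) ^ 2)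
      = ∑ j, (dd (ee j) (fun q : Pt => ζ q.1 q.2) (y, s) / ζ y s) ^ 2 from
    Finset.sum_congr rfl (fun j _ => by rw [hlogj j])]
  rw [show (∑ j, A y j * dd (ee j) (fun q : Pt => Real.log (ζ q.1 q.2)) (y, s))
      = ∑ j, A y j * (dd (ee j) (fun q : Pt => ζ q.1 q.2) (y, s) / ζ y s) from
    Finset.sum_congr rfl (fun j _ => by rw [hlogj j])]
  simp only [Fin.sum_univ_three] at hE ⊢
  field_simp
  linear_combination (2 * ζ y s) * hE



lemma pt_comb {hbar eps : ℝ} {X : Pt → ℝ} {g : (Fin 3 → ℝ) → ℝ} {x : Fin 3 → ℝ} {t : ℝ}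
    (hX : DifferentiableAt ℝ X (x, t)) (hg : DifferentiableAt ℝ g x) :
    pt (fun y s => eps * (hbar * X (y, s)) - g y) x t = eps * (hbar * dd tv X (x, t)) := by
  have hd : DifferentiableAt ℝ (fun q : Pt => eps * (hbar * X (q.1, q.2)) - g q.1) (x, t) := by
    exact diff_comb hX hg
  rw [pt_eq hd]
  simp only [Prod.mk.eta]
  rw [dd_comb hX hg tv]
  simp [tv]

lemma pd_comb {hbar eps : ℝ} {X : Pt → ℝ} {g : (Fin 3 → ℝ) → ℝ} {x : Fin 3 → ℝ} {t : ℝ}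
    (j : Fin 3) (hX : DifferentiableAt ℝ X (x, t)) (hg : DifferentiableAt ℝ g x) :
    pd j (fun y s => eps * (hbar * X (y, s)) - g y) x t
      = eps * (hbar * dd (ee j) X (x, t)) - ds j g x := by
  have hd : DifferentiableAt ℝ (fun q : Pt => eps * (hbar * X (q.1, q.2)) - g q.1) (x, t) := by
    exact diff_comb hX hg
  rw [pd_eq j hd]
  simp only [Prod.mk.eta]
  rw [dd_comb hX hg (ee j)]
  rfl



lemma key (hbar eps : ℝ) (heps : eps = 1 ∨ eps = -1)
    (V : (Fin 3 → ℝ) → ℝ) (hV : ContDiff ℝ (⊤ : ℕ∞) V)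
    (A : (Fin 3 → ℝ) → Fin 3 → ℝ) (hA : ContDiff ℝ (⊤ : ℕ∞) A)
    (I : Set ℝ) (hI : IsOpen I)
    (ζ : (Fin 3 → ℝ) → ℝ → ℝ)
    (hζ : ContDiffOn ℝ (⊤ : ℕ∞) (fun p : Pt => ζ p.1 p.2) (univ ×ˢ I))
    (hpos : ∀ x, ∀ t ∈ I, 0 < ζ x t)
    (hPDE : ∀ x, ∀ t ∈ I,
      eps * (hbar * pt ζ x t) =
        -(hbar ^ 2 / 2) * lap ζ x t + eps * (hbar * (∑ j, A x j * pd j ζ x t))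
          + eps * ((hbar / 2) * (∑ j, pds j (fun y => A y j) x) * ζ x t)
          - (1 / 2) * (∑ j, (A x j) ^ 2) * ζ x t + V x * ζ x t)
    (C : (Fin 3 → ℝ) → ℝ → Fin 3 → ℝ)
    (hC : ∀ x t i, C x t i = eps * (hbar * pd i (fun y s => Real.log (ζ y s)) x t) - A x i) :
    ∀ x, ∀ t ∈ I, ∀ i,
      pt (fun y s => C y s i) x t + (∑ j, C x t j * pd j (fun y s => C y s i) x t)
        + eps * ((hbar / 2) * lap (fun y s => C y s i) x t)
      = (∑ j, C x t j * (pds i (fun y => A y j) x - pds j (fun y => A y i) x))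
        + eps * ((hbar / 2) * (∑ j, (ds i (ds j (fun y => A y j)) x
            - ds j (ds j (fun y => A y i)) x)))
        + pds i V x := by
  intro x t ht i
  have hU : IsOpen ((univ : Set (Fin 3 → ℝ)) ×ˢ I) := isOpen_univ.prod hI
  have hmem : ∀ (y' : Fin 3 → ℝ) (s' : ℝ), s' ∈ I →
      ((y', s') : Pt) ∈ (univ : Set (Fin 3 → ℝ)) ×ˢ I := fun y' s' hs' => ⟨mem_univ y', hs'⟩
  have hp : ((x, t) : Pt) ∈ (univ : Set (Fin 3 → ℝ)) ×ˢ I := hmem x t ht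
  have hZn : ∀ (n : ℕ) (r : Pt), r ∈ (univ : Set (Fin 3 → ℝ)) ×ˢ I →
      ContDiffAt ℝ n (fun q : Pt => ζ q.1 q.2) r := fun n r hr =>
    (hζ.contDiffAt (hU.mem_nhds hr)).of_le (by exact_mod_cast le_top)
  have hGn : ∀ (n : ℕ) (r : Pt), r ∈ (univ : Set (Fin 3 → ℝ)) ×ˢ I →
      ContDiffAt ℝ n (fun q : Pt => Real.log (ζ q.1 q.2)) r := fun n r hr =>
    ContDiffAt.comp (g := Real.log) r (Real.contDiffAt_log.mpr (ne_of_gt (hpos r.1 r.2 hr.2))) (hZn n r hr)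
  have hDG : ∀ (r : Pt), r ∈ (univ : Set (Fin 3 → ℝ)) ×ˢ I →
      DifferentiableAt ℝ (fun q : Pt => Real.log (ζ q.1 q.2)) r := fun r hr =>
    (hGn 1 r hr).differentiableAt (by simp)
  have hDn : ∀ (v : Pt) (r : Pt), r ∈ (univ : Set (Fin 3 → ℝ)) ×ˢ I →
      DifferentiableAt ℝ (dd v (fun q : Pt => Real.log (ζ q.1 q.2))) r := fun v r hr =>
    (contDiffAt_dd (n := 1) (hGn (1 + 1) r hr) v).differentiableAt (by simp)
  have hDn2 : ∀ (v w : Pt) (r : Pt), r ∈ (univ : Set (Fin 3 → ℝ)) ×ˢ I →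
      DifferentiableAt ℝ (dd v (dd w (fun q : Pt => Real.log (ζ q.1 q.2)))) r := fun v w r hr =>
    (contDiffAt_dd (n := 1) (contDiffAt_dd (n := 2) (hGn (2 + 1) r hr) w) v).differentiableAt
      (by simp)
  have hAj : ∀ j : Fin 3, ContDiff ℝ (⊤ : ℕ∞) (fun y' => A y' j) := fun j => by
    exact (ContinuousLinearMap.proj (R := ℝ) (φ := fun _ : Fin 3 => ℝ) j).contDiff.comp hA
  have hAdj : ∀ j : Fin 3, Differentiable ℝ (fun y' => A y' j) := fun j =>
    (hAj j).differentiable (by simp)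
  have hdsAd : ∀ (k j : Fin 3), Differentiable ℝ (ds k (fun y' => A y' j)) := fun k j =>
    (contDiff_ds (hAj j) k).differentiable (by simp)
  have hVd : Differentiable ℝ V := hV.differentiable (by simp)
  -- drift in fderiv language on U
  have hCU : ∀ (k : Fin 3), ∀ y', ∀ s' ∈ I, C y' s' k
      = eps * (hbar * dd (ee k) (fun q : Pt => Real.log (ζ q.1 q.2)) (y', s')) - A y' k := by
    intro k y' s' hs'
    rw [hC y' s' k, pd_eq k (hDG _ (hmem y' s' hs'))]
  -- time derivative of the drift
  have hpt : pt (fun y s => C y s i) x t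
      = eps * (hbar * dd tv (dd (ee i) (fun q : Pt => Real.log (ζ q.1 q.2))) (x, t)) := by
    rw [pt_congr hI ht (fun y' s' hs' => hCU i y' s' hs') x]
    exact pt_comb (hDn (ee i) _ hp) ((hAdj i) x)
  -- space derivatives of the drift
  have hpd : ∀ j : Fin 3, pd j (fun y s => C y s i) x t
      = eps * (hbar * dd (ee i) (dd (ee j) (fun q : Pt => Real.log (ζ q.1 q.2))) (x, t))
        - ds j (fun y' => A y' i) x := by
    intro j
    rw [pd_congr ht (fun y' s' hs' => hCU i y' s' hs') j x]
    rw [pd_comb j (hDn (ee i) _ hp) ((hAdj i) x)]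
    rw [schwarz (hGn 2 _ hp) (ee j) (ee i)]
  -- spatial Laplacian of the drift
  have hpd2 : ∀ j : Fin 3, ∀ y', ∀ s' ∈ I, pd j (fun y s => C y s i) y' s'
      = eps * (hbar * dd (ee j) (dd (ee i) (fun q : Pt => Real.log (ζ q.1 q.2))) (y', s'))
        - ds j (fun y'' => A y'' i) y' := by
    intro j y' s' hs'
    rw [pd_congr hs' (fun y'' s'' hs'' => hCU i y'' s'' hs'') j y']
    exact pd_comb j (hDn (ee i) _ (hmem y' s' hs')) ((hAdj i) y')
  have hlap : lap (fun y s => C y s i) x t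
      = ∑ j, (eps * (hbar * dd (ee j) (dd (ee j)
            (dd (ee i) (fun q : Pt => Real.log (ζ q.1 q.2)))) (x, t))
          - ds j (ds j (fun y' => A y' i)) x) := by
    unfold lap
    refine Finset.sum_congr rfl (fun j _ => ?_)
    rw [pd_congr ht (hpd2 j) j x]
    exact pd_comb j (hDn2 (ee j) (ee i) _ hp) ((hdsAd j i) x)
  -- differentiate the PDE for log ζ in the direction i
  have hstar := gpde hbar eps V A hA I hI ζ hζ hpos hPDE
  have hfun : (fun r : ℝ =>
        eps * (hbar * dd tv (fun q : Pt => Real.log (ζ q.1 q.2)) (Function.update x i r, t)))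
      = fun r : ℝ =>
        -(hbar ^ 2 / 2) *
            ((∑ j, dd (ee j) (dd (ee j) (fun q : Pt => Real.log (ζ q.1 q.2)))
                (Function.update x i r, t))
              + ∑ j, (dd (ee j) (fun q : Pt => Real.log (ζ q.1 q.2))
                (Function.update x i r, t)) ^ 2)
          + eps * (hbar * ∑ j, A (Function.update x i r) j
              * dd (ee j) (fun q : Pt => Real.log (ζ q.1 q.2)) (Function.update x i r, t))
          + eps * ((hbar / 2) * ∑ j, ds j (fun z => A z j) (Function.update x i r))
          - (1 / 2) * ∑ j, (A (Function.update x i r) j) ^ 2 + V (Function.update x i r) :=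
    funext fun r => hstar (Function.update x i r) t ht
  have hL : HasDerivAt (fun r : ℝ =>
        eps * (hbar * dd tv (fun q : Pt => Real.log (ζ q.1 q.2)) (Function.update x i r, t)))
      (eps * (hbar * dd (ee i) (dd tv (fun q : Pt => Real.log (ζ q.1 q.2))) (x, t))) (x i) :=
    ((hd_atom i (hDn tv _ hp)).const_mul hbar).const_mul eps
  have hS1 : HasDerivAt (fun r : ℝ =>
        ∑ j, dd (ee j) (dd (ee j) (fun q : Pt => Real.log (ζ q.1 q.2)))
          (Function.update x i r, t))
      (∑ j, dd (ee i) (dd (ee j) (dd (ee j) (fun q : Pt => Real.log (ζ q.1 q.2)))) (x, t))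
      (x i) :=
    HasDerivAt.fun_sum (fun j _ => hd_atom i (hDn2 (ee j) (ee j) _ hp))
  have hS2 : HasDerivAt (fun r : ℝ =>
        ∑ j, (dd (ee j) (fun q : Pt => Real.log (ζ q.1 q.2)) (Function.update x i r, t)) ^ 2)
      (∑ j, 2 * dd (ee j) (fun q : Pt => Real.log (ζ q.1 q.2)) (x, t)
        * dd (ee i) (dd (ee j) (fun q : Pt => Real.log (ζ q.1 q.2))) (x, t)) (x i) := by
    refine HasDerivAt.fun_sum (fun j _ => ?_)
    have h := (hd_atom i (hDn (ee j) _ hp)).fun_pow 2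
    simpa [Function.update_eq_self] using h
  have hS3 : HasDerivAt (fun r : ℝ =>
        ∑ j, A (Function.update x i r) j
          * dd (ee j) (fun q : Pt => Real.log (ζ q.1 q.2)) (Function.update x i r, t))
      (∑ j, (ds i (fun y' => A y' j) x * dd (ee j) (fun q : Pt => Real.log (ζ q.1 q.2)) (x, t)
        + A x j * dd (ee i) (dd (ee j) (fun q : Pt => Real.log (ζ q.1 q.2))) (x, t))) (x i) := by
    refine HasDerivAt.fun_sum (fun j _ => ?_)
    have h := (hd_satom i ((hAdj j) x)).fun_mul (hd_atom i (hDn (ee j) _ hp))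
    simpa [Function.update_eq_self] using h
  have hS4 : HasDerivAt (fun r : ℝ => ∑ j, ds j (fun z => A z j) (Function.update x i r))
      (∑ j, ds i (ds j (fun z => A z j)) x) (x i) :=
    HasDerivAt.fun_sum (fun j _ => hd_satom i ((hdsAd j j) x))
  have hS5 : HasDerivAt (fun r : ℝ => ∑ j, (A (Function.update x i r) j) ^ 2)
      (∑ j, 2 * A x j * ds i (fun y' => A y' j) x) (x i) := by
    refine HasDerivAt.fun_sum (fun j _ => ?_)
    simpa [Function.update_eq_self] using (hd_satom i ((hAdj j) x)).fun_pow 2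
  have hS6 : HasDerivAt (fun r : ℝ => V (Function.update x i r)) (ds i V x) (x i) :=
    hd_satom i (hVd x)
  have hR := ((((hS1.add hS2).const_mul (-(hbar ^ 2 / 2))).add
      ((hS3.const_mul hbar).const_mul eps)).add
        ((hS4.const_mul (hbar / 2)).const_mul eps)).sub (hS5.const_mul (1 / 2)) |>.add hS6
  have heq : eps * (hbar * dd (ee i) (dd tv (fun q : Pt => Real.log (ζ q.1 q.2))) (x, t))
      = -(hbar ^ 2 / 2) *
            ((∑ j, dd (ee i) (dd (ee j) (dd (ee j)
                (fun q : Pt => Real.log (ζ q.1 q.2)))) (x, t))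
              + ∑ j, 2 * dd (ee j) (fun q : Pt => Real.log (ζ q.1 q.2)) (x, t)
                  * dd (ee i) (dd (ee j) (fun q : Pt => Real.log (ζ q.1 q.2))) (x, t))
          + eps * (hbar * ∑ j, (ds i (fun y' => A y' j) x
                * dd (ee j) (fun q : Pt => Real.log (ζ q.1 q.2)) (x, t)
              + A x j * dd (ee i) (dd (ee j) (fun q : Pt => Real.log (ζ q.1 q.2))) (x, t)))
          + eps * ((hbar / 2) * ∑ j, ds i (ds j (fun z => A z j)) x)
          - (1 / 2) * ∑ j, 2 * A x j * ds i (fun y' => A y' j) x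
          + ds i V x := by
    refine hL.unique ?_
    rw [hfun]
    exact hR
  -- symmetry of second derivatives
  have hswapL : dd (ee i) (dd tv (fun q : Pt => Real.log (ζ q.1 q.2))) (x, t)
      = dd tv (dd (ee i) (fun q : Pt => Real.log (ζ q.1 q.2))) (x, t) :=
    schwarz (hGn 2 _ hp) (ee i) tv
  have hswap3 : ∀ j : Fin 3,
      dd (ee i) (dd (ee j) (dd (ee j) (fun q : Pt => Real.log (ζ q.1 q.2)))) (x, t)
        = dd (ee j) (dd (ee j) (dd (ee i) (fun q : Pt => Real.log (ζ q.1 q.2)))) (x, t) := by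
    intro j
    have h1 : dd (ee i) (dd (ee j) (dd (ee j) (fun q : Pt => Real.log (ζ q.1 q.2)))) (x, t)
        = dd (ee j) (dd (ee i) (dd (ee j) (fun q : Pt => Real.log (ζ q.1 q.2)))) (x, t) :=
      schwarz (contDiffAt_dd (n := 2) (hGn (2 + 1) _ hp) (ee j)) (ee i) (ee j)
    have h2 : dd (ee j) (dd (ee i) (dd (ee j) (fun q : Pt => Real.log (ζ q.1 q.2)))) (x, t)
        = dd (ee j) (dd (ee j) (dd (ee i) (fun q : Pt => Real.log (ζ q.1 q.2)))) (x, t) := by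
      refine dd_congr_nhds ?_ (ee j)
      filter_upwards [hU.mem_nhds hp] with r hr
      exact schwarz (hGn 2 _ hr) (ee i) (ee j)
    rw [h1, h2]
  rw [hswapL] at heq
  simp only [Fin.sum_univ_three] at heq
  rw [hswap3 0, hswap3 1, hswap3 2] at heq
  -- assemble the final identity
  rw [hpt, hlap]
  rw [show (∑ j, C x t j * pd j (fun y s => C y s i) x t)
      = ∑ j, (eps * (hbar * dd (ee j) (fun q : Pt => Real.log (ζ q.1 q.2)) (x, t)) - A x j)
          * (eps * (hbar * dd (ee i) (dd (ee j)
              (fun q : Pt => Real.log (ζ q.1 q.2))) (x, t))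
            - ds j (fun y' => A y' i) x) from
    Finset.sum_congr rfl (fun j _ => by rw [hCU j x t ht, hpd j])]
  rw [show (∑ j, C x t j * (pds i (fun y => A y j) x - pds j (fun y => A y i) x))
      = ∑ j, (eps * (hbar * dd (ee j) (fun q : Pt => Real.log (ζ q.1 q.2)) (x, t)) - A x j)
          * (ds i (fun y' => A y' j) x - ds j (fun y' => A y' i) x) from
    Finset.sum_congr rfl (fun j _ => by
      rw [hCU j x t ht, pds_eq i ((hAdj j) x), pds_eq j ((hAdj i) x)])]
  rw [pds_eq i (hVd x)]
  simp only [Fin.sum_univ_three]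
  rw [heq]
  rcases heps with rfl | rfl
  · ring
  · ring



end StochNewton

/-- **Time-symmetric dynamical equation with Lorentz force.**  For positive solutions
`η` of `ħ∂η/∂t = Hη` and `η*` of `−ħ∂η*/∂t = H⁺η*`, the forward drift `B := ħ∇log η − A`
and the backward drift `B* := −ħ∇log η* − A` satisfy componentwise
`(1/2)(D_t B_i + D*_t B*_i) = (1/2)Σ_j (B_j + B*_j)(∂A_j/∂x_i − ∂A_i/∂x_j) + ∂V/∂x_i`,
where `D_t = ∂/∂t + B·∇ + (ħ/2)Δ` and `D*_t = ∂/∂t + B*·∇ − (ħ/2)Δ`. -/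
theorem time_symmetric_stochastic_newton_with_lorentz_force
    (hbar : ℝ) (hhbar : 0 < hbar)
    (V : (Fin 3 → ℝ) → ℝ) (hV : ContDiff ℝ (⊤ : ℕ∞) V)
    (A : (Fin 3 → ℝ) → Fin 3 → ℝ) (hA : ContDiff ℝ (⊤ : ℕ∞) A)
    (I : Set ℝ) (hI : IsOpen I)
    (η ηstar : (Fin 3 → ℝ) → ℝ → ℝ)
    (hηsmooth : ContDiffOn ℝ (⊤ : ℕ∞) (fun p : (Fin 3 → ℝ) × ℝ => η p.1 p.2) (univ ×ˢ I))
    (hηstarsmooth :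
      ContDiffOn ℝ (⊤ : ℕ∞) (fun p : (Fin 3 → ℝ) × ℝ => ηstar p.1 p.2) (univ ×ˢ I))
    (hηpos : ∀ x, ∀ t ∈ I, 0 < η x t)
    (hηstarpos : ∀ x, ∀ t ∈ I, 0 < ηstar x t)
    (hPDE : ∀ x, ∀ t ∈ I,
      hbar * pt η x t =
        -(hbar ^ 2 / 2) * lap η x t + hbar * (∑ j, A x j * pd j η x t)
          + (hbar / 2) * (∑ j, pds j (fun y => A y j) x) * η x t
          - (1 / 2) * (∑ j, (A x j) ^ 2) * η x t + V x * η x t)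
    (hPDEstar : ∀ x, ∀ t ∈ I,
      -(hbar * pt ηstar x t) =
        -(hbar ^ 2 / 2) * lap ηstar x t - hbar * (∑ j, A x j * pd j ηstar x t)
          - (hbar / 2) * (∑ j, pds j (fun y => A y j) x) * ηstar x t
          - (1 / 2) * (∑ j, (A x j) ^ 2) * ηstar x t + V x * ηstar x t)
    (B Bstar : (Fin 3 → ℝ) → ℝ → Fin 3 → ℝ)
    (hB : ∀ x t i, B x t i = hbar * pd i (fun y s => Real.log (η y s)) x t - A x i)
    (hBstar : ∀ x t i,
      Bstar x t i = -(hbar * pd i (fun y s => Real.log (ηstar y s)) x t) - A x i) :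
    ∀ x, ∀ t ∈ I, ∀ i,
      (1 / 2) * ((pt (fun y s => B y s i) x t
            + (∑ j, B x t j * pd j (fun y s => B y s i) x t)
            + (hbar / 2) * lap (fun y s => B y s i) x t)
          + (pt (fun y s => Bstar y s i) x t
            + (∑ j, Bstar x t j * pd j (fun y s => Bstar y s i) x t)
            - (hbar / 2) * lap (fun y s => Bstar y s i) x t))
      = (1 / 2) * (∑ j, (B x t j + Bstar x t j)
            * (pds i (fun y => A y j) x - pds j (fun y => A y i) x))
          + pds i V x := by
  intro x t ht i
  have E1 := StochNewton.key hbar 1 (Or.inl rfl) V hV A hA I hI η hηsmooth hηpos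
    (fun x t ht => by linear_combination hPDE x t ht)
    B (fun x t i => by rw [hB x t i]; ring) x t ht i
  have E2 := StochNewton.key hbar (-1) (Or.inr rfl) V hV A hA I hI ηstar hηstarsmooth hηstarpos
    (fun x t ht => by linear_combination hPDEstar x t ht)
    Bstar (fun x t i => by rw [hBstar x t i]; ring) x t ht i
  simp only [Fin.sum_univ_three] at E1 E2 ⊢
  linear_combination (1 / 2) * E1 + (1 / 2) * E2
end
end

section
/- Let ħ > 0, let V : ℝ³ → ℝ be smooth and time-independent, and let η : ℝ³ × I → ℝ be a smooth strictly positive function on an open time interval I satisfying the backward heat equation with potential V: ħ ∂η/∂t = −(ħ²/2) Δη + V η. Define B := ħ ∇ log η and the energy function h := (1/2)|B|² + (ħ/2) ∇·B − V. Then (∂/∂t + B·∇ + (ħ/2)Δ) h = 0; that is, h(X(t),t) is a martingale (first integral) of the associated diffusion. -/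
open MeasureTheory Real Set

noncomputable section

namespace EnergyAux

open Filter

abbrev E3 : Type := (Fin 3 → ℝ) × ℝ

def vi (i : Fin 3) : E3 := (Pi.single i 1, 0)
def vt : E3 := (0, 1)

lemma pt_def (f : (Fin 3 → ℝ) → ℝ → ℝ) (x : Fin 3 → ℝ) (t : ℝ) :
    pt f x t = deriv (f x) t := rfl

lemma pd_def (i : Fin 3) (f : (Fin 3 → ℝ) → ℝ → ℝ) (x : Fin 3 → ℝ) (t : ℝ) :
    pd i f x t = deriv (fun s => f (Function.update x i s) t) (x i) := rfl

lemma update_line (x : Fin 3 → ℝ) (i : Fin 3) :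
    (fun s : ℝ => Function.update x i s) = fun s => x + (s - x i) • (Pi.single i 1 : Fin 3 → ℝ) := by
  funext s j
  rcases eq_or_ne j i with rfl | hj
  · simp
  · simp [Function.update_of_ne hj, Pi.single_eq_of_ne hj]

lemma hasDerivAt_update (x : Fin 3 → ℝ) (i : Fin 3) (s : ℝ) :
    HasDerivAt (fun r : ℝ => Function.update x i r) (Pi.single i 1) s := by
  rw [update_line]
  simpa using (((hasDerivAt_id s).sub_const (x i)).smul_const (Pi.single i 1)).const_add x

variable {I : Set ℝ}

lemma memU {t : ℝ} (ht : t ∈ I) (x : Fin 3 → ℝ) : ((x, t) : E3) ∈ univ ×ˢ I := ⟨trivial, ht⟩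

section generic
variable {Y : Type*} [NormedAddCommGroup Y] [NormedSpace ℝ Y] {F : E3 → Y}

lemma diffOn (hI : IsOpen I) (hF : ContDiffOn ℝ (⊤ : ℕ∞) F (univ ×ˢ I)) :
    DifferentiableOn ℝ F (univ ×ˢ I) :=
  hF.differentiableOn (by simp)

lemma diffAt (hI : IsOpen I) (hF : ContDiffOn ℝ (⊤ : ℕ∞) F (univ ×ˢ I))
    {x : Fin 3 → ℝ} {t : ℝ} (ht : t ∈ I) : DifferentiableAt ℝ F (x, t) :=
  (diffOn hI hF).differentiableAt ((isOpen_univ.prod hI).mem_nhds (memU ht x))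

lemma fderiv_smooth (hI : IsOpen I) (hF : ContDiffOn ℝ (⊤ : ℕ∞) F (univ ×ˢ I)) :
    ContDiffOn ℝ (⊤ : ℕ∞) (fderiv ℝ F) (univ ×ˢ I) :=
  ((contDiffOn_infty_iff_fderiv_of_isOpen (isOpen_univ.prod hI)).1 hF).2

end generic

variable {F : E3 → ℝ}

lemma smooth_clm (hI : IsOpen I) (hF : ContDiffOn ℝ (⊤ : ℕ∞) F (univ ×ˢ I)) (v : E3) :
    ContDiffOn ℝ (⊤ : ℕ∞) (fun p => fderiv ℝ F p v) (univ ×ˢ I) :=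
  (fderiv_smooth hI hF).clm_apply contDiffOn_const

lemma hasDerivAt_slice_t (hI : IsOpen I) (hF : ContDiffOn ℝ (⊤ : ℕ∞) F (univ ×ˢ I))
    {x : Fin 3 → ℝ} {t : ℝ} (ht : t ∈ I) :
    HasDerivAt (fun s => F (x, s)) (fderiv ℝ F (x, t) vt) t := by
  have h1 : HasDerivAt (fun s : ℝ => ((x, s) : E3)) vt t :=
    (hasDerivAt_const t x).prodMk (hasDerivAt_id t)
  exact ((diffAt hI hF ht).hasFDerivAt).comp_hasDerivAt t h1

lemma hasDerivAt_slice_i (hI : IsOpen I) (hF : ContDiffOn ℝ (⊤ : ℕ∞) F (univ ×ˢ I))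
    {x : Fin 3 → ℝ} {t : ℝ} (ht : t ∈ I) (i : Fin 3) :
    HasDerivAt (fun s => F (Function.update x i s, t)) (fderiv ℝ F (x, t) (vi i)) (x i) := by
  have h1 : HasDerivAt (fun s : ℝ => ((Function.update x i s, t) : E3)) (vi i) (x i) :=
    (hasDerivAt_update x i (x i)).prodMk (hasDerivAt_const (x i) t)
  have h0 : HasFDerivAt F (fderiv ℝ F (x, t))
      ((fun s : ℝ => ((Function.update x i s, t) : E3)) (x i)) := by
    rw [show (fun s : ℝ => ((Function.update x i s, t) : E3)) (x i) = (x, t) by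
      simp [Function.update_eq_self]]
    exact (diffAt hI hF ht).hasFDerivAt
  exact h0.comp_hasDerivAt (x i) h1

lemma pt_hasDerivAt (hI : IsOpen I) (hF : ContDiffOn ℝ (⊤ : ℕ∞) F (univ ×ˢ I))
    (f : (Fin 3 → ℝ) → ℝ → ℝ) (hrep : ∀ y, ∀ s ∈ I, f y s = F (y, s))
    {x : Fin 3 → ℝ} {t : ℝ} (ht : t ∈ I) : HasDerivAt (f x) (pt f x t) t := by
  have he : f x =ᶠ[nhds t] fun s => F (x, s) := by
    filter_upwards [hI.mem_nhds ht] with s hs using hrep x s hs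
  have h1 := (hasDerivAt_slice_t hI hF ht (x := x)).congr_of_eventuallyEq he
  have h2 : pt f x t = fderiv ℝ F (x, t) vt := by rw [pt_def]; exact h1.deriv
  rw [h2]; exact h1

lemma pt_rep (hI : IsOpen I) (hF : ContDiffOn ℝ (⊤ : ℕ∞) F (univ ×ˢ I))
    (f : (Fin 3 → ℝ) → ℝ → ℝ) (hrep : ∀ y, ∀ s ∈ I, f y s = F (y, s))
    {x : Fin 3 → ℝ} {t : ℝ} (ht : t ∈ I) : pt f x t = fderiv ℝ F (x, t) vt := by
  have he : f x =ᶠ[nhds t] fun s => F (x, s) := by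
    filter_upwards [hI.mem_nhds ht] with s hs using hrep x s hs
  have h1 := (hasDerivAt_slice_t hI hF ht (x := x)).congr_of_eventuallyEq he
  rw [pt_def]; exact h1.deriv

lemma pd_hasDerivAt (hI : IsOpen I) (hF : ContDiffOn ℝ (⊤ : ℕ∞) F (univ ×ˢ I))
    (f : (Fin 3 → ℝ) → ℝ → ℝ) (hrep : ∀ y, ∀ s ∈ I, f y s = F (y, s))
    {x : Fin 3 → ℝ} {t : ℝ} (ht : t ∈ I) (i : Fin 3) :
    HasDerivAt (fun s => f (Function.update x i s) t) (pd i f x t) (x i) := by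
  have hfe : (fun s => f (Function.update x i s) t)
      = fun s => F (Function.update x i s, t) := funext fun s => hrep _ t ht
  have h1 := hasDerivAt_slice_i hI hF ht i (x := x)
  have h2 : pd i f x t = fderiv ℝ F (x, t) (vi i) := by rw [pd_def, hfe]; exact h1.deriv
  rw [h2, hfe]; exact h1

lemma pd_rep (hI : IsOpen I) (hF : ContDiffOn ℝ (⊤ : ℕ∞) F (univ ×ˢ I))
    (f : (Fin 3 → ℝ) → ℝ → ℝ) (hrep : ∀ y, ∀ s ∈ I, f y s = F (y, s))
    {x : Fin 3 → ℝ} {t : ℝ} (ht : t ∈ I) (i : Fin 3) :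
    pd i f x t = fderiv ℝ F (x, t) (vi i) := by
  have hfe : (fun s => f (Function.update x i s) t)
      = fun s => F (Function.update x i s, t) := funext fun s => hrep _ t ht
  rw [pd_def, hfe]; exact (hasDerivAt_slice_i hI hF ht i (x := x)).deriv

lemma sym (hI : IsOpen I) (hF : ContDiffOn ℝ (⊤ : ℕ∞) F (univ ×ˢ I))
    {x : Fin 3 → ℝ} {t : ℝ} (ht : t ∈ I) (v w : E3) :
    fderiv ℝ (fun q => fderiv ℝ F q v) (x, t) w
      = fderiv ℝ (fun q => fderiv ℝ F q w) (x, t) v := by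
  have hd : DifferentiableAt ℝ (fderiv ℝ F) (x, t) :=
    (diffOn hI (fderiv_smooth hI hF)).differentiableAt
      ((isOpen_univ.prod hI).mem_nhds (memU ht x))
  have hev : ∀ᶠ q in nhds ((x, t) : E3), HasFDerivAt F (fderiv ℝ F q) q := by
    filter_upwards [(isOpen_univ.prod hI).mem_nhds (memU ht x)] with q hq using
      (((diffOn hI hF).differentiableAt ((isOpen_univ.prod hI).mem_nhds hq)).hasFDerivAt)
  have key := second_derivative_symmetric_of_eventually hev hd.hasFDerivAt
  rw [fderiv_clm_apply hd (differentiableAt_const v),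
    fderiv_clm_apply hd (differentiableAt_const w)]
  simp [key v w]

lemma swap_pt_pd (hI : IsOpen I) (hF : ContDiffOn ℝ (⊤ : ℕ∞) F (univ ×ˢ I))
    (f : (Fin 3 → ℝ) → ℝ → ℝ) (hrep : ∀ y, ∀ s ∈ I, f y s = F (y, s))
    {x : Fin 3 → ℝ} {t : ℝ} (ht : t ∈ I) (i : Fin 3) :
    pt (pd i f) x t = pd i (pt f) x t := by
  rw [pt_rep hI (smooth_clm hI hF (vi i)) (pd i f)
      (fun y s hs => pd_rep hI hF f hrep hs i) ht,
    pd_rep hI (smooth_clm hI hF vt) (pt f)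
      (fun y s hs => pt_rep hI hF f hrep hs) ht i,
    sym hI hF ht (vi i) vt]

lemma swap_pt_pd2 (hI : IsOpen I) (hF : ContDiffOn ℝ (⊤ : ℕ∞) F (univ ×ˢ I))
    (f : (Fin 3 → ℝ) → ℝ → ℝ) (hrep : ∀ y, ∀ s ∈ I, f y s = F (y, s))
    {x : Fin 3 → ℝ} {t : ℝ} (ht : t ∈ I) (i : Fin 3) :
    pt (pd i (pd i f)) x t = pd i (pd i (pt f)) x t := by
  have h1 := swap_pt_pd hI (smooth_clm hI hF (vi i)) (pd i f)
    (fun y s hs => pd_rep hI hF f hrep hs i) (x := x) ht i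
  rw [h1, pd_def, pd_def]
  congr 1
  funext s
  exact swap_pt_pd hI hF f hrep ht i (x := Function.update x i s)

end EnergyAux

open EnergyAux Filter in
/-- **The energy function is a martingale (first integral).**  For a time-independent
potential `V` and a positive solution `η` of the backward heat equation
`ħ ∂η/∂t = −(ħ²/2)Δη + Vη`, with `B := ħ∇log η` and energy function
`h := (1/2)|B|² + (ħ/2)∇·B − V`, one has `(∂/∂t + B·∇ + (ħ/2)Δ) h = 0`. -/
theorem energy_function_is_martingale
    (hbar : ℝ) (hhbar : 0 < hbar)
    (V : (Fin 3 → ℝ) → ℝ) (hV : ContDiff ℝ (⊤ : ℕ∞) V)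
    (I : Set ℝ) (hI : IsOpen I)
    (η : (Fin 3 → ℝ) → ℝ → ℝ)
    (hsmooth : ContDiffOn ℝ (⊤ : ℕ∞) (fun p : (Fin 3 → ℝ) × ℝ => η p.1 p.2) (univ ×ˢ I))
    (hpos : ∀ x, ∀ t ∈ I, 0 < η x t)
    (hPDE : ∀ x, ∀ t ∈ I,
      hbar * pt η x t = -(hbar ^ 2 / 2) * lap η x t + V x * η x t)
    (B : (Fin 3 → ℝ) → ℝ → Fin 3 → ℝ)
    (hB : ∀ x t i, B x t i = hbar * pd i (fun y s => Real.log (η y s)) x t)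
    (h : (Fin 3 → ℝ) → ℝ → ℝ)
    (hh : ∀ x t, h x t =
      (1 / 2) * (∑ i, (B x t i) ^ 2)
        + (hbar / 2) * (∑ i, pd i (fun y s => B y s i) x t) - V x) :
    ∀ x, ∀ t ∈ I,
      pt h x t + (∑ i, B x t i * pd i h x t) + (hbar / 2) * lap h x t = 0 := by
  intro x t ht
  set L : (Fin 3 → ℝ) → ℝ → ℝ := fun y s => Real.log (η y s) with hLdef
  set G : E3 → ℝ := fun p => Real.log (η p.1 p.2) with hGdef
  have hGsm : ContDiffOn ℝ (⊤ : ℕ∞) G (univ ×ˢ I) :=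
    hsmooth.log fun p hp => (hpos p.1 p.2 hp.2).ne'
  have Lrep : ∀ y, ∀ s ∈ I, L y s = G (y, s) := fun _ _ _ => rfl
  have hηrep : ∀ y, ∀ s ∈ I, η y s = (fun p : (Fin 3 → ℝ) × ℝ => η p.1 p.2) (y, s) :=
    fun _ _ _ => rfl
  -- h in terms of L (valid for all y s)
  have hhL : ∀ y s, h y s = (hbar ^ 2 / 2) * (∑ i, (pd i L y s) ^ 2)
      + (hbar ^ 2 / 2) * (∑ i, pd i (pd i L) y s) - V y := by
    intro y s
    have hBpd : ∀ i : Fin 3, pd i (fun z r => B z r i) y s = hbar * pd i (pd i L) y s := by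
      intro i
      rw [pd_def, pd_def]
      have hfe : (fun r => B (Function.update y i r) s i)
          = fun r => hbar * pd i L (Function.update y i r) s :=
        funext fun r => hB _ _ i
      rw [hfe, deriv_const_mul_field]
    have hB2 : ∀ i : Fin 3, (B y s i) ^ 2 = hbar ^ 2 * (pd i L y s) ^ 2 := fun i => by
      rw [hB]; ring
    rw [hh y s]
    simp only [hB2, hBpd]
    rw [← Finset.mul_sum, ← Finset.mul_sum]
    ring
  -- the PDE rewritten for L : h = -ħ ∂ₜ L on I
  have F3 : ∀ y, ∀ s ∈ I, h y s = -hbar * pt L y s := by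
    intro y s hs
    have hη : η y s ≠ 0 := (hpos y s hs).ne'
    have Ht : HasDerivAt (η y) (pt η y s) s := pt_hasDerivAt hI hsmooth η hηrep hs
    have eLt : pt L y s = pt η y s / η y s := by
      rw [pt_def]; exact (Ht.log hη).deriv
    have ePd : ∀ (z : Fin 3 → ℝ), ∀ s' ∈ I, ∀ i, pd i L z s' = pd i η z s' / η z s' := by
      intro z s' hs' i
      have Hd : HasDerivAt (fun r => η (Function.update z i r) s') (pd i η z s') (z i) :=
        pd_hasDerivAt hI hsmooth η hηrep hs' i
      have hne : η (Function.update z i (z i)) s' ≠ 0 := by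
        rw [Function.update_eq_self]; exact (hpos z s' hs').ne'
      have hl := Hd.log hne
      simp only [Function.update_eq_self] at hl
      rw [pd_def]; exact hl.deriv
    have ePdPd : ∀ i : Fin 3, pd i (pd i L) y s =
        (pd i (pd i η) y s * η y s - pd i η y s * pd i η y s) / (η y s) ^ 2 := by
      intro i
      have Hnum : HasDerivAt (fun r => pd i η (Function.update y i r) s)
          (pd i (pd i η) y s) (y i) :=
        pd_hasDerivAt hI (smooth_clm hI hsmooth (vi i)) (pd i η)
          (fun z r hr => pd_rep hI hsmooth η hηrep hr i) hs i
      have Hden : HasDerivAt (fun r => η (Function.update y i r) s) (pd i η y s) (y i) :=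
        pd_hasDerivAt hI hsmooth η hηrep hs i
      have hne : η (Function.update y i (y i)) s ≠ 0 := by
        rw [Function.update_eq_self]; exact hη
      have Hq := Hnum.div Hden hne
      simp only [Function.update_eq_self] at Hq
      have hfe : (fun r => pd i L (Function.update y i r) s)
          = fun r => pd i η (Function.update y i r) s / η (Function.update y i r) s :=
        funext fun r => ePd _ s hs i
      rw [pd_def, hfe]
      exact Hq.deriv
    have hpde := hPDE y s hs
    simp only [lap] at hpde
    have e1 : (∑ i, pd i (pd i L) y s)
        = ((∑ i, pd i (pd i η) y s) * η y s - ∑ i, pd i η y s * pd i η y s) / (η y s) ^ 2 := by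
      simp only [ePdPd]
      rw [← Finset.sum_div, Finset.sum_sub_distrib, ← Finset.sum_mul]
    have e2 : (∑ i, (pd i L y s) ^ 2) = (∑ i, pd i η y s * pd i η y s) / (η y s) ^ 2 := by
      have : ∀ i : Fin 3, (pd i L y s) ^ 2 = pd i η y s * pd i η y s / (η y s) ^ 2 := by
        intro i; rw [ePd y s hs i]; ring
      simp only [this]
      rw [← Finset.sum_div]
    rw [hhL y s, e1, e2, eLt]
    set SA := ∑ i, pd i (pd i η) y s with hSA
    set SB := ∑ i, pd i η y s * pd i η y s with hSB
    set P := pt η y s with hP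
    set e := η y s with he
    field_simp
    linear_combination (2*e) * hpde
  -- time derivative of h via the explicit formula
  have hQder : ∀ i : Fin 3, HasDerivAt (fun s => pd i L x s) (pt (pd i L) x t) t := fun i =>
    pt_hasDerivAt hI (smooth_clm hI hGsm (vi i)) (pd i L)
      (fun z r hr => pd_rep hI hGsm L Lrep hr i) ht
  have hQQder : ∀ i : Fin 3,
      HasDerivAt (fun s => pd i (pd i L) x s) (pt (pd i (pd i L)) x t) t := fun i =>
    pt_hasDerivAt hI (smooth_clm hI (smooth_clm hI hGsm (vi i)) (vi i)) (pd i (pd i L))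
      (fun z r hr => pd_rep hI (smooth_clm hI hGsm (vi i)) (pd i L)
        (fun z' r' hr' => pd_rep hI hGsm L Lrep hr' i) hr i) ht
  have hder : HasDerivAt (h x)
      ((hbar ^ 2 / 2) * (∑ i, (2 : ℝ) * pd i L x t ^ 1 * pt (pd i L) x t)
        + (hbar ^ 2 / 2) * (∑ i, pt (pd i (pd i L)) x t)) t := by
    have hfun : h x = fun s => (hbar ^ 2 / 2) * (∑ i, (pd i L x s) ^ 2)
        + (hbar ^ 2 / 2) * (∑ i, pd i (pd i L) x s) - V x := funext fun s => hhL x s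
    rw [hfun]
    exact (((HasDerivAt.fun_sum fun i _ => (hQder i).fun_pow 2).const_mul _).add
      ((HasDerivAt.fun_sum fun i _ => hQQder i).const_mul _)).sub_const _
  have hpth : pt h x t
      = ∑ i, (hbar ^ 2 * (pd i L x t * pd i (pt L) x t)
          + (hbar ^ 2 / 2) * pd i (pd i (pt L)) x t) := by
    have h0 := hder.deriv
    rw [pt_def, h0, Finset.mul_sum, Finset.mul_sum, ← Finset.sum_add_distrib]
    refine Finset.sum_congr rfl fun i _ => ?_
    rw [swap_pt_pd hI hGsm L Lrep ht i, swap_pt_pd2 hI hGsm L Lrep ht i]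
    ring
  -- spatial derivatives of h via h = -ħ ∂ₜ L
  have hpdh : ∀ (z : Fin 3 → ℝ) (i : Fin 3), pd i h z t = -hbar * pd i (pt L) z t := by
    intro z i
    have hfe : (fun r => h (Function.update z i r) t)
        = fun r => -hbar * pt L (Function.update z i r) t :=
      funext fun r => F3 _ t ht
    rw [pd_def, pd_def, hfe, deriv_const_mul_field]
  have hlap : ∀ i : Fin 3, pd i (pd i h) x t = -hbar * pd i (pd i (pt L)) x t := by
    intro i
    have hfe : (fun r => pd i h (Function.update x i r) t)
        = fun r => -hbar * pd i (pt L) (Function.update x i r) t :=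
      funext fun r => hpdh _ i
    rw [pd_def, pd_def, hfe, deriv_const_mul_field]
  -- assemble
  rw [hpth]
  have e2 : (∑ i, B x t i * pd i h x t)
      = ∑ i, (hbar * pd i L x t) * (-hbar * pd i (pt L) x t) :=
    Finset.sum_congr rfl fun i _ => by rw [hB, hpdh x i]
  have e3 : lap h x t = ∑ i, -hbar * pd i (pd i (pt L)) x t := by
    simp only [lap]
    exact Finset.sum_congr rfl fun i _ => hlap i
  rw [e2, e3, Finset.mul_sum, ← Finset.sum_add_distrib, ← Finset.sum_add_distrib]
  exact Finset.sum_eq_zero fun i _ => by ring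


end
end

section
/- (Deformed uncertainty relation.) Let ħ > 0 and let ρ : ℝ³ → ℝ be a C¹ strictly positive probability density such that ∂ρ/∂x_k and x_j ∂ρ/∂x_k are integrable for all j,k and x_j ρ(x) → 0 as |x| → ∞ along each coordinate direction. Let B, B* : ℝ³ → ℝ³ be measurable drift fields related by B*(x) = B(x) − ħ ∇ log ρ(x), with x_j B_k ρ and x_j B*_k ρ integrable. Then for all 1 ≤ j,k ≤ 3: ∫_{ℝ³} x_j (B*_k(x) − B_k(x)) ρ(x) dx = ħ δ_{jk}. -/
open MeasureTheory Real Filter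

noncomputable section

lemma myHasDerivAt_update (c : Fin 3 → ℝ) (k : Fin 3) (s : ℝ) :
    HasDerivAt (fun t : ℝ => Function.update c k t) (Pi.single k 1) s := by
  rw [hasDerivAt_pi]
  intro i
  rcases eq_or_ne i k with rfl | h
  · simpa [Function.update_self, Pi.single_eq_same] using (hasDerivAt_id' s)
  · simpa [Function.update_of_ne h, Pi.single_eq_of_ne h] using (hasDerivAt_const s (c i))

lemma hasDerivAt_line (ρ : (Fin 3 → ℝ) → ℝ) (hρC1 : ContDiff ℝ 1 ρ)
    (c : Fin 3 → ℝ) (k : Fin 3) (s : ℝ) :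
    HasDerivAt (fun t : ℝ => ρ (Function.update c k t))
      (pds k ρ (Function.update c k s)) s := by
  have hD : ∀ t : ℝ, HasDerivAt (fun t : ℝ => ρ (Function.update c k t))
      (fderiv ℝ ρ (Function.update c k t) (Pi.single k 1)) t := fun t =>
    ((hρC1.differentiable one_ne_zero (Function.update c k t)).hasFDerivAt).comp_hasDerivAt t
      (myHasDerivAt_update c k t)
  have : pds k ρ (Function.update c k s)
      = fderiv ℝ ρ (Function.update c k s) (Pi.single k 1) := by
    have h2 : ∀ t : ℝ, Function.update (Function.update c k s) k t = Function.update c k t :=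
      fun t => Function.update_idem ..
    have := (hD s).deriv
    simp only [pds, h2, Function.update_self]
    rw [this]
  rw [this]; exact hD s

lemma key_ibp (ρ : (Fin 3 → ℝ) → ℝ) (hρC1 : ContDiff ℝ 1 ρ)
    (hρint : Integrable ρ) (j k : Fin 3)
    (hxdρint : Integrable (fun x : Fin 3 → ℝ => x j * pds k ρ x))
    (hdecay : ∀ (x : Fin 3 → ℝ),
      Tendsto (fun s : ℝ => Function.update x k s j * ρ (Function.update x k s))
        atTop (nhds 0) ∧
      Tendsto (fun s : ℝ => Function.update x k s j * ρ (Function.update x k s))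
        atBot (nhds 0)) :
    ∫ x : Fin 3 → ℝ,
      (x j * pds k ρ x + (if j = k then 1 else 0) * ρ x) = 0 := by
  set F : (Fin 3 → ℝ) → ℝ :=
    fun x => x j * pds k ρ x + (if j = k then 1 else 0) * ρ x with hF
  have hFint : Integrable F := hxdρint.add (hρint.const_mul _)
  set e := MeasurableEquiv.piFinSuccAbove (fun _ : Fin 3 => ℝ) k with he
  have mp : MeasurePreserving e volume volume :=
    volume_preserving_piFinSuccAbove (fun _ : Fin 3 => ℝ) k
  have hsymm : ∀ p : ℝ × (Fin 2 → ℝ), e.symm p = Fin.insertNth k p.1 p.2 := by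
    intro p
    simp [he, MeasurableEquiv.piFinSuccAbove_symm_apply, Fin.insertNthEquiv]
  have hGint : Integrable (F ∘ e.symm) :=
    ((mp.symm e).integrable_comp_emb (e.symm.measurableEmbedding)).mpr hFint
  have h1 : ∫ x, F x = ∫ p : ℝ × (Fin 2 → ℝ), F (e.symm p) :=
    ((mp.symm e).integral_comp' F).symm
  have hGint' : Integrable (fun p : ℝ × (Fin 2 → ℝ) => F (e.symm p))
      ((volume : Measure ℝ).prod (volume : Measure (Fin 2 → ℝ))) := hGint
  have h2 : ∫ p : ℝ × (Fin 2 → ℝ), F (e.symm p)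
      = ∫ y : Fin 2 → ℝ, ∫ s : ℝ, F (e.symm (s, y)) :=
    integral_prod_symm _ hGint'
  have hae : ∀ᵐ y : Fin 2 → ℝ, Integrable (fun s : ℝ => F (e.symm (s, y))) :=
    hGint'.prod_left_ae
  have hinner : ∀ᵐ y : Fin 2 → ℝ, (∫ s : ℝ, F (e.symm (s, y))) = 0 := by
    filter_upwards [hae] with y hy
    set c := Fin.insertNth (α := fun _ : Fin 3 => ℝ) k (0 : ℝ) y with hc
    have hu : ∀ s : ℝ, e.symm (s, y) = Function.update c k s := by
      intro s
      rw [hsymm]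
      exact (Fin.update_insertNth (α := fun _ : Fin 3 => ℝ) k (0 : ℝ) s y).symm
    have ha : ∀ s : ℝ, HasDerivAt
        (fun t : ℝ => Function.update c k t j)
        (if j = k then (1 : ℝ) else 0) s := by
      intro s
      rcases eq_or_ne j k with rfl | hne
      · simpa [Function.update_self] using (hasDerivAt_id' s)
      · simp only [if_neg hne]
        simpa [Function.update_of_ne hne] using (hasDerivAt_const s (c j))
    have hd : ∀ s : ℝ, HasDerivAt
        (fun t : ℝ => Function.update c k t j * ρ (Function.update c k t))
        (F (Function.update c k s)) s := by
      intro s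
      have := (ha s).mul (hasDerivAt_line ρ hρC1 c k s)
      refine this.congr_deriv ?_
      simp only [hF]
      ring
    have hint2 : Integrable (fun s : ℝ => F (Function.update c k s)) := by
      refine hy.congr (Filter.Eventually.of_forall fun s => ?_)
      simp only [hu s]
    have := integral_of_hasDerivAt_of_tendsto hd hint2 (hdecay c).2 (hdecay c).1
    simp only [hu]
    rw [this]; ring
  rw [h1, h2, integral_congr_ae hinner, integral_zero]

lemma pds_log (ρ : (Fin 3 → ℝ) → ℝ) (hρC1 : ContDiff ℝ 1 ρ)
    (hρpos : ∀ x, 0 < ρ x) (k : Fin 3) (x : Fin 3 → ℝ) :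
    pds k (fun y => Real.log (ρ y)) x = pds k ρ x / ρ x := by
  have h0 : Function.update x k (x k) = x := Function.update_eq_self k x
  have h := hasDerivAt_line ρ hρC1 x k (x k)
  rw [h0] at h
  have hlog := h.log (by rw [h0]; exact ne_of_gt (hρpos x))
  have hd := hlog.deriv
  simp only [pds]
  rw [hd, h0]
  rfl

theorem deformed_uncertainty_relation'
    (hbar : ℝ)
    (ρ : (Fin 3 → ℝ) → ℝ) (hρC1 : ContDiff ℝ 1 ρ)
    (hρpos : ∀ x, 0 < ρ x)
    (hρprob : ∫ x : Fin 3 → ℝ, ρ x = 1)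
    (hρint : Integrable ρ)
    (hxdρint : ∀ j k : Fin 3, Integrable (fun x : Fin 3 → ℝ => x j * pds k ρ x))
    (hdecay : ∀ (j k : Fin 3) (x : Fin 3 → ℝ),
      Tendsto (fun s : ℝ => Function.update x k s j * ρ (Function.update x k s))
        atTop (nhds 0) ∧
      Tendsto (fun s : ℝ => Function.update x k s j * ρ (Function.update x k s))
        atBot (nhds 0))
    (B Bstar : (Fin 3 → ℝ) → Fin 3 → ℝ)
    (hrel : ∀ x i, Bstar x i = B x i - hbar * pds i (fun y => Real.log (ρ y)) x) :
    ∀ j k : Fin 3,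
      (∫ x : Fin 3 → ℝ, x j * (Bstar x k - B x k) * ρ x)
        = hbar * (if j = k then 1 else 0) := by
  intro j k
  have hpt : ∀ x : Fin 3 → ℝ,
      x j * (Bstar x k - B x k) * ρ x = (-hbar) * (x j * pds k ρ x) := by
    intro x
    rw [hrel x k, pds_log ρ hρC1 hρpos k x]
    have hne : ρ x ≠ 0 := ne_of_gt (hρpos x)
    field_simp
    ring
  have hkey := key_ibp ρ hρC1 hρint j k (hxdρint j k) (hdecay j k)
  have hsplit : ∫ x : Fin 3 → ℝ,
      (x j * pds k ρ x + (if j = k then 1 else 0) * ρ x)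
      = (∫ x : Fin 3 → ℝ, x j * pds k ρ x)
        + (if j = k then (1:ℝ) else 0) * ∫ x : Fin 3 → ℝ, ρ x := by
    rw [integral_add (hxdρint j k) (hρint.const_mul _), integral_const_mul]
  have hval : (∫ x : Fin 3 → ℝ, x j * pds k ρ x)
      = -(if j = k then (1:ℝ) else 0) := by
    rw [hkey, hρprob] at hsplit
    linarith [hsplit]
  calc (∫ x : Fin 3 → ℝ, x j * (Bstar x k - B x k) * ρ x)
      = ∫ x : Fin 3 → ℝ, (-hbar) * (x j * pds k ρ x) := by
        exact integral_congr_ae (Filter.Eventually.of_forall hpt)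
    _ = (-hbar) * ∫ x : Fin 3 → ℝ, x j * pds k ρ x := integral_const_mul _ _
    _ = hbar * (if j = k then 1 else 0) := by rw [hval]; ring

/-- **Deformed (stochastic) uncertainty relation.**  If `ρ > 0` is a `C¹` probability
density on `ℝ³` with suitable integrability and decay, and the drifts satisfy
`B* = B − ħ∇log ρ`, then `∫ x_j (B*_k − B_k) ρ dx = ħ δ_{jk}`, the probabilistic
counterpart of Heisenberg's commutation relation `[Q_j, P_k] = iħδ_{jk}`. -/
theorem deformed_uncertainty_relation
    (hbar : ℝ) (hhbar : 0 < hbar)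
    (ρ : (Fin 3 → ℝ) → ℝ) (hρC1 : ContDiff ℝ 1 ρ)
    (hρpos : ∀ x, 0 < ρ x)
    (hρprob : ∫ x : Fin 3 → ℝ, ρ x = 1)
    (hρint : Integrable ρ)
    (hdρint : ∀ k : Fin 3, Integrable (fun x : Fin 3 → ℝ => pds k ρ x))
    (hxdρint : ∀ j k : Fin 3, Integrable (fun x : Fin 3 → ℝ => x j * pds k ρ x))
    (hdecay : ∀ (j k : Fin 3) (x : Fin 3 → ℝ),
      Tendsto (fun s : ℝ => Function.update x k s j * ρ (Function.update x k s))
        atTop (nhds 0) ∧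
      Tendsto (fun s : ℝ => Function.update x k s j * ρ (Function.update x k s))
        atBot (nhds 0))
    (B Bstar : (Fin 3 → ℝ) → Fin 3 → ℝ)
    (hBmeas : Measurable B) (hBstarmeas : Measurable Bstar)
    (hrel : ∀ x i, Bstar x i = B x i - hbar * pds i (fun y => Real.log (ρ y)) x)
    (hBint : ∀ j k : Fin 3, Integrable (fun x : Fin 3 → ℝ => x j * B x k * ρ x))
    (hBstarint : ∀ j k : Fin 3, Integrable (fun x : Fin 3 → ℝ => x j * Bstar x k * ρ x)) :
    ∀ j k : Fin 3,
      (∫ x : Fin 3 → ℝ, x j * (Bstar x k - B x k) * ρ x)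
        = hbar * (if j = k then 1 else 0) := by
  exact deformed_uncertainty_relation' hbar ρ hρC1 hρpos hρprob hρint hxdρint hdecay B Bstar hrel
end
end
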